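/- arXiv:1307.0885 — 6 statements merged into one kernel-verified Lean document; each statement's English description precedes it below -/
import Mathlib

section
/- Let n = 2m+1. Then gcd(2·3^m + 1, 3^n - 1) = 1. -/
theorem stmt_6 (m n : ℕ) (hn : n = 2 * m + 1) :
    Nat.gcd (2 * 3 ^ m + 1) (3 ^ n - 1) = 1 := by
  set a := 3 ^ m with ha
  have ha1 : 1 ≤ a := Nat.one_le_pow _ _ (by norm_num)
  have haa : 1 ≤ a * a := Nat.one_le_iff_ne_zero.mpr (by positivity)
  have hpow : 3 ^ n = 3 * (a * a) := by
    subst hn; rw [ha, pow_succ, two_mul, pow_add]; ring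
  set d := Nat.gcd (2 * a + 1) (3 ^ n - 1) with hd
  have h1 : d ∣ 2 * a + 1 := Nat.gcd_dvd_left _ _
  have h2 : d ∣ 3 * (a * a) - 1 := hpow ▸ Nat.gcd_dvd_right _ _
  have hX : d ∣ 12 * (a * a) + 12 * a + 3 := by
    have e : (2 * a + 1) * ((2 * a + 1) * 3) = 12 * (a * a) + 12 * a + 3 := by ring
    exact e ▸ h1.mul_right _
  have hZ : d ∣ 12 * a + 6 := by
    have e : (2 * a + 1) * 6 = 12 * a + 6 := by ring
    exact e ▸ h1.mul_right _
  have hY : d ∣ 12 * (a * a) - 4 := by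
    have e : (3 * (a * a) - 1) * 4 = 12 * (a * a) - 4 := by omega
    exact e ▸ h2.mul_right _
  have hW : d ∣ 12 * a + 7 := by
    have := Nat.dvd_sub hX hY
    have e : 12 * (a * a) + 12 * a + 3 - (12 * (a * a) - 4) = 12 * a + 7 := by omega
    rwa [e] at this
  have : d ∣ 1 := by
    have := Nat.dvd_sub hW hZ
    simpa using this
  exact Nat.dvd_one.mp this
end

section
/- Let n = 2m+1 with m ≥ 1. Then gcd(2(3^{m+1} - 1), 3^n - 1) = 2 and gcd((3^n + 1)/4, 3^n - 1) = 1. -/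
theorem stmt_7 (m n : ℕ) (hm : 1 ≤ m) (hn : n = 2 * m + 1) :
    Nat.gcd (2 * (3 ^ (m + 1) - 1)) (3 ^ n - 1) = 2 ∧
    Nat.gcd ((3 ^ n + 1) / 4) (3 ^ n - 1) = 1 := by
  subst hn
  -- 9^m = 8t+1
  have h8 : (8 : ℕ) ∣ 9 ^ m - 1 := by
    simpa using Nat.sub_dvd_pow_sub_pow 9 1 m
  obtain ⟨t, ht⟩ := h8
  have h9 : (9 : ℕ) ^ m = 8 * t + 1 := by
    have : 1 ≤ (9:ℕ)^m := Nat.one_le_pow _ _ (by norm_num)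
    omega
  have h3n : (3 : ℕ) ^ (2 * m + 1) = 24 * t + 3 := by
    have : (3:ℕ) ^ (2 * m + 1) = 9 ^ m * 3 := by
      rw [pow_succ, pow_mul]; norm_num
    rw [this, h9]; ring
  -- coprimality of exponents
  have hco : Nat.Coprime (m + 1) (2 * m + 1) := by
    have h1 : (2 * m + 1) % (m + 1) = m := by
      rw [show 2 * m + 1 = (m + 1) + m by ring, Nat.add_mod_left]
      exact Nat.mod_eq_of_lt (by omega)
    unfold Nat.Coprime
    rw [Nat.gcd_rec, h1]
    rw [Nat.gcd_self_add_right m 1]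
    exact Nat.gcd_one_right m
  -- g := gcd(3^(m+1)-1, 3^(2m+1)-1) divides 2
  set g := Nat.gcd (3 ^ (m + 1) - 1) (3 ^ (2 * m + 1) - 1) with hg
  have hgd : g ∣ 2 := by
    obtain ⟨x, hx⟩ := Nat.exists_mul_mod_eq_one_of_coprime hco (by omega)
    have hy : (m + 1) * x = (2 * m + 1) * ((m + 1) * x / (2 * m + 1)) + 1 := by
      conv_lhs => rw [← Nat.div_add_mod ((m + 1) * x) (2 * m + 1)]
      omega
    set y := (m + 1) * x / (2 * m + 1) with hyd
    have hp1 : (1:ℕ) ≤ 3 ^ (m + 1) := Nat.one_le_pow _ _ (by norm_num)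
    have hp2 : (1:ℕ) ≤ 3 ^ (2 * m + 1) := Nat.one_le_pow _ _ (by norm_num)
    have e1 : (3 : ZMod g) ^ (m + 1) = 1 := by
      have : (3:ℕ) ^ (m + 1) ≡ 1 [MOD g] :=
        ((Nat.modEq_iff_dvd' hp1).mpr (Nat.gcd_dvd_left _ _)).symm
      have := (ZMod.natCast_eq_natCast_iff _ _ _).mpr this
      push_cast at this
      simpa using this
    have e2 : (3 : ZMod g) ^ (2 * m + 1) = 1 := by
      have : (3:ℕ) ^ (2 * m + 1) ≡ 1 [MOD g] :=
        ((Nat.modEq_iff_dvd' hp2).mpr (Nat.gcd_dvd_right _ _)).symm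
      have := (ZMod.natCast_eq_natCast_iff _ _ _).mpr this
      push_cast at this
      simpa using this
    have e3 : (3 : ZMod g) = 1 := by
      have c1 : (3 : ZMod g) ^ ((m + 1) * x) = 1 := by
        rw [pow_mul, e1, one_pow]
      have c2 : (3 : ZMod g) ^ ((m + 1) * x) = 3 := by
        rw [hy, pow_add, pow_mul, e2, one_pow, pow_one, one_mul]
      rw [c2] at c1; exact c1
    have : (3:ℕ) ≡ 1 [MOD g] := by
      have := (ZMod.natCast_eq_natCast_iff 3 1 g).mp (by push_cast; simpa using e3)
      exact this
    have := (Nat.modEq_iff_dvd' (by norm_num : 1 ≤ 3)).mp this.symm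
    simpa using this
  -- first part
  constructor
  · set G := Nat.gcd (2 * (3 ^ (m + 1) - 1)) (3 ^ (2 * m + 1) - 1) with hG
    have hG4 : G ∣ 4 := by
      have h1 : G = Nat.gcd (3 ^ (2 * m + 1) - 1) (2 * (3 ^ (m + 1) - 1)) :=
        Nat.gcd_comm _ _
      have h2 : Nat.gcd (3 ^ (2 * m + 1) - 1) (2 * (3 ^ (m + 1) - 1)) ∣ Nat.gcd (3 ^ (2 * m + 1) - 1) 2 * Nat.gcd (3 ^ (2 * m + 1) - 1) (3 ^ (m + 1) - 1) :=
        gcd_mul_dvd_mul_gcd (3 ^ (2 * m + 1) - 1) 2 (3 ^ (m + 1) - 1)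
      have h3 : Nat.gcd (3 ^ (2 * m + 1) - 1) 2 ∣ 2 := Nat.gcd_dvd_right _ _
      have h4 : Nat.gcd (3 ^ (2 * m + 1) - 1) (3 ^ (m + 1) - 1) ∣ 2 := by
        rw [Nat.gcd_comm]; exact hgd
      calc G ∣ Nat.gcd (3 ^ (2 * m + 1) - 1) 2 *
            Nat.gcd (3 ^ (2 * m + 1) - 1) (3 ^ (m + 1) - 1) := h1 ▸ h2
        _ ∣ 2 * 2 := mul_dvd_mul h3 h4
    have h2G : 2 ∣ G := Nat.dvd_gcd ⟨3 ^ (m + 1) - 1, rfl⟩ (by rw [h3n]; omega)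
    have hGr : G ∣ 3 ^ (2 * m + 1) - 1 := Nat.gcd_dvd_right _ _
    rw [h3n] at hGr
    have hGle : G ≤ 4 := Nat.le_of_dvd (by norm_num) hG4
    have hGpos : 0 < G := by
      have := Nat.le_of_dvd ?_ h2G
      · omega
      · rcases Nat.eq_zero_or_pos G with h | h
        · exfalso; rw [h] at hGr; omega
        · exact h
    have hG24 : G ∣ 24 * t + 3 - 1 := hGr
    interval_cases G <;> omega
  -- second part
  · have hA : (3 ^ (2 * m + 1) + 1) / 4 = 6 * t + 1 := by rw [h3n]; omega
    have hsub : 3 ^ (2 * m + 1) - 1 = 24 * t + 2 := by omega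
    rw [hA, hsub]
    set d := Nat.gcd (6 * t + 1) (24 * t + 2) with hd
    have d1 : d ∣ 6 * t + 1 := Nat.gcd_dvd_left _ _
    have d2 : d ∣ 24 * t + 2 := Nat.gcd_dvd_right _ _
    have d3 : d ∣ 24 * t + 4 := by
      have : d ∣ 4 * (6 * t + 1) := Dvd.dvd.mul_left d1 4
      simpa [mul_add, ← mul_assoc] using this
    have d4 : d ∣ 2 := by
      have := Nat.dvd_sub d3 d2
      simpa using this
    have hdpos : 0 < d := Nat.gcd_pos_of_pos_left _ (by omega)
    have hdle : d ≤ 2 := Nat.le_of_dvd (by norm_num) d4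
    show d = 1
    interval_cases d <;> omega
end

section
/- Let n = 2m+1 ≥ 3. For every j in the cyclotomic coset of 1 or of 2·3^m + 1 modulo 3^n - 1 (i.e., j ≡ 3^i or (2·3^m+1)·3^i mod 3^n - 1 for some i), one has H(j) = wt(j) + wt((3^{m+1}-1)j) - wt(2(3^{m+1}-1)j) = 1, where wt denotes the ternary digit sum of the residue modulo 3^n - 1. -/
/-- `wt n a` is the ternary digit sum of the residue of `a` modulo `3^n - 1`. -/
def wt (n a : ℕ) : ℕ := (Nat.digits 3 (a % (3 ^ n - 1))).sum

/-- `H n m j = wt(j) + wt((3^{m+1}-1)j) - wt(2(3^{m+1}-1)j)` as an integer. -/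
def H (n m j : ℕ) : ℤ :=
  (wt n j : ℤ) + wt n ((3 ^ (m + 1) - 1) * j) - wt n (2 * (3 ^ (m + 1) - 1) * j)

lemma sum_digits_small {x : ℕ} (h0 : 0 < x) (h3 : x < 3) :
    (Nat.digits 3 x).sum = x := by
  rw [Nat.digits_def' (by norm_num : (1:ℕ) < 3) h0, Nat.div_eq_of_lt h3]
  simp [Nat.mod_eq_of_lt h3]

lemma sum_digits_add_mul_pow : ∀ (k s q : ℕ), s < 3 ^ k → q < 3 →
    (Nat.digits 3 (q * 3 ^ k + s)).sum = q + (Nat.digits 3 s).sum := by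
  intro k
  induction k with
  | zero =>
    intro s q hs hq
    interval_cases s
    have d1 : (Nat.digits 3 1).sum = 1 := sum_digits_small (by norm_num) (by norm_num)
    have d2 : (Nat.digits 3 2).sum = 2 := sum_digits_small (by norm_num) (by norm_num)
    interval_cases q <;> simp [d1, d2]
  | succ k ih =>
    intro s q hs hq
    have hkpos : (0:ℕ) < 3 ^ k := Nat.pow_pos (by norm_num)
    have e : q * 3 ^ (k + 1) + s = 3 * (q * 3 ^ k) + s := by ring
    rw [e]
    rcases Nat.eq_zero_or_pos (3 * (q * 3 ^ k) + s) with h0 | h0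
    · have hy : q * 3 ^ k = 0 ∧ s = 0 := by omega
      have hq0 : q = 0 := by
        rcases Nat.mul_eq_zero.mp hy.1 with h | h
        · exact h
        · omega
      simp [hq0, hy.2]
    rw [Nat.digits_def' (by norm_num : (1:ℕ) < 3) h0]
    have hmod : (3 * (q * 3 ^ k) + s) % 3 = s % 3 := by omega
    have hdiv : (3 * (q * 3 ^ k) + s) / 3 = q * 3 ^ k + s / 3 := by omega
    have hs3 : s / 3 < 3 ^ k := by
      have : s < 3 ^ k * 3 := by rw [← pow_succ]; exact hs
      omega
    rw [hmod, hdiv, List.sum_cons, ih _ _ hs3 hq]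
    rcases Nat.eq_zero_or_pos s with rfl | hsp
    · simp
    · rw [Nat.digits_def' (by norm_num : (1:ℕ) < 3) hsp, List.sum_cons]; omega

lemma sum_digits_pow_sub_one : ∀ k : ℕ, (Nat.digits 3 (3 ^ k - 1)).sum = 2 * k := by
  intro k
  induction k with
  | zero => simp
  | succ k ih =>
    have h1 : 1 ≤ 3 ^ k := Nat.one_le_pow _ _ (by norm_num)
    have e : 3 ^ (k + 1) - 1 = 3 * 3 ^ k - 1 := by rw [pow_succ, mul_comm]
    rw [e]
    have hpos : 0 < 3 * 3 ^ k - 1 := by omega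
    rw [Nat.digits_def' (by norm_num : (1:ℕ) < 3) hpos]
    have hmod : (3 * 3 ^ k - 1) % 3 = 2 := by omega
    have hdiv : (3 * 3 ^ k - 1) / 3 = 3 ^ k - 1 := by omega
    rw [hmod, hdiv, List.sum_cons, ih]; omega

lemma wt_three_mul (n a : ℕ) (hn : 2 ≤ n) : wt n (3 * a) = wt n a := by
  obtain ⟨n', rfl⟩ : ∃ n', n = n' + 1 := ⟨n - 1, by omega⟩
  have hsp : (0:ℕ) < 3 ^ n' := Nat.pow_pos (by norm_num)
  have hpow : (3:ℕ) ^ (n' + 1) = 3 * 3 ^ n' := by rw [pow_succ, mul_comm]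
  obtain ⟨M, hMeq⟩ : ∃ M, (3:ℕ) ^ (n' + 1) = M + 1 :=
    ⟨3 ^ (n' + 1) - 1, by omega⟩
  have hM1 : (3:ℕ) ^ (n' + 1) - 1 = M := by omega
  have hMpos : 0 < M := by omega
  unfold wt
  rw [hM1]
  set r := a % M with hr
  have hrM : r < M := Nat.mod_lt _ hMpos
  have key : (3 * a) % M = (3 * r) % M :=
    (Nat.ModEq.mul_left 3 ((Nat.mod_modEq a M).symm) : _)
  rcases Nat.eq_zero_or_pos r with hr0 | hrp
  · rw [key, hr0]
    simp
  obtain ⟨s, q, hrqs, hsn, hq3⟩ :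
      ∃ s q, r = q * 3 ^ n' + s ∧ s < 3 ^ n' ∧ q < 3 := by
    refine ⟨r % 3 ^ n', r / 3 ^ n', ?_, Nat.mod_lt _ hsp, ?_⟩
    · rw [mul_comm]
      exact (Nat.div_add_mod r (3 ^ n')).symm
    · have hlt : r < 3 ^ n' * 3 := by rw [← pow_succ]; omega
      exact Nat.div_lt_of_lt_mul hlt
  have hqs : 3 * s + q < M := by
    rcases Nat.lt_or_ge (3 * s + q) M with h | h
    · exact h
    · exfalso
      have hseq : s = 3 ^ n' - 1 ∧ q = 2 := by constructor <;> omega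
      have hrM' : r = M := by
        rw [hrqs, hseq.1, hseq.2]
        omega
      omega
  have hcong : (3 * r) % M = 3 * s + q := by
    have h3 : 3 * r = M * q + (3 * s + q) := by
      have h4 : 3 * r = q * 3 ^ (n' + 1) + 3 * s := by rw [hrqs]; ring
      rw [h4, hMeq]
      ring
    rw [h3, Nat.mul_add_mod, Nat.mod_eq_of_lt hqs]
  have hpos2 : 0 < 3 * s + q := by
    rcases Nat.eq_zero_or_pos (3 * s + q) with h | h
    · exfalso
      have hq0 : q = 0 := by omega
      have hs0 : s = 0 := by omega
      rw [hrqs, hq0, hs0] at hrp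
      simp at hrp
    · exact h
  rw [key, hcong, hrqs,
    sum_digits_add_mul_pow _ _ _ hsn hq3,
    Nat.digits_def' (by norm_num : (1:ℕ) < 3) hpos2]
  have hm3 : (3 * s + q) % 3 = q := by omega
  have hd3 : (3 * s + q) / 3 = s := by omega
  rw [hm3, hd3, List.sum_cons]

lemma wt_pow_mul (n a i : ℕ) (hn : 2 ≤ n) : wt n (3 ^ i * a) = wt n a := by
  induction i with
  | zero => simp
  | succ i ih =>
    rw [pow_succ, mul_comm (3 ^ i) 3, mul_assoc, wt_three_mul _ _ hn, ih]

lemma wt_congr {n a b : ℕ} (h : a ≡ b [MOD 3 ^ n - 1]) : wt n a = wt n b := by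
  unfold wt
  rw [h]

theorem stmt_10 (m n : ℕ) (hm : 1 ≤ m) (hn : n = 2 * m + 1) (j : ℕ)
    (hj : ∃ i ≤ n - 1, j ≡ 3 ^ i [MOD 3 ^ n - 1] ∨
      j ≡ (2 * 3 ^ m + 1) * 3 ^ i [MOD 3 ^ n - 1]) :
    H n m j = 1 := by
  have hn2 : 2 ≤ n := by omega
  have h1 : 1 ≤ 3 ^ (m + 1) := Nat.one_le_pow _ _ (by norm_num)
  have h3n : 1 ≤ 3 ^ n := Nat.one_le_pow _ _ (by norm_num)
  have h3m : 3 ≤ 3 ^ m := by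
    calc (3:ℕ) = 3 ^ 1 := by norm_num
    _ ≤ 3 ^ m := Nat.pow_le_pow_right (by norm_num) hm
  have h27 : 27 ≤ 3 ^ n := by
    calc (27:ℕ) = 3 ^ 3 := by norm_num
    _ ≤ 3 ^ n := Nat.pow_le_pow_right (by norm_num) (by omega)
  have hm1 : 3 ^ (m + 1) = 3 * 3 ^ m := by rw [pow_succ, mul_comm]
  have hnpow : 3 ^ n = 3 * (3 ^ m * 3 ^ m) := by rw [hn]; ring
  have hXX : 3 * 3 ^ m ≤ 3 ^ m * 3 ^ m := Nat.mul_le_mul_right _ h3m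
  have hbig : 2 * 3 ^ (m + 1) < 3 ^ n - 1 := by rw [hm1, hnpow]; omega
  -- key reduction: H n m j = H n m c for the coset representative c
  have hred : ∀ c : ℕ, (∃ i, j ≡ c * 3 ^ i [MOD 3 ^ n - 1]) → H n m j = H n m c := by
    rintro c ⟨i, hc⟩
    unfold H
    have e1 : wt n j = wt n c := by
      rw [wt_congr hc, mul_comm, wt_pow_mul _ _ _ hn2]
    have e2 : wt n ((3 ^ (m + 1) - 1) * j) = wt n ((3 ^ (m + 1) - 1) * c) := by
      rw [wt_congr (hc.mul_left (3 ^ (m + 1) - 1))]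
      have h : (3 ^ (m + 1) - 1) * (c * 3 ^ i) = 3 ^ i * ((3 ^ (m + 1) - 1) * c) := by
        ring
      rw [h, wt_pow_mul _ _ _ hn2]
    have e3 : wt n (2 * (3 ^ (m + 1) - 1) * j) = wt n (2 * (3 ^ (m + 1) - 1) * c) := by
      rw [wt_congr (hc.mul_left (2 * (3 ^ (m + 1) - 1)))]
      have h : 2 * (3 ^ (m + 1) - 1) * (c * 3 ^ i)
          = 3 ^ i * (2 * (3 ^ (m + 1) - 1) * c) := by ring
      rw [h, wt_pow_mul _ _ _ hn2]
    rw [e1, e2, e3]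
  -- wt values
  have wtA : wt n (3 ^ (m + 1) - 1) = 2 * (m + 1) := by
    unfold wt
    rw [Nat.mod_eq_of_lt (by omega), sum_digits_pow_sub_one]
  have wt2A : wt n (2 * (3 ^ (m + 1) - 1)) = 2 * m + 2 := by
    unfold wt
    have h2A : 2 * (3 ^ (m + 1) - 1) = 1 * 3 ^ (m + 1) + (3 ^ (m + 1) - 2) := by omega
    rw [Nat.mod_eq_of_lt (by omega), h2A,
      sum_digits_add_mul_pow _ _ _ (by omega) (by norm_num)]
    have hpos : 0 < 3 ^ (m + 1) - 2 := by omega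
    rw [Nat.digits_def' (by norm_num : (1:ℕ) < 3) hpos]
    have hmod : (3 ^ (m + 1) - 2) % 3 = 1 := by rw [hm1]; omega
    have hdiv : (3 ^ (m + 1) - 2) / 3 = 3 ^ m - 1 := by rw [hm1]; omega
    rw [hmod, hdiv, List.sum_cons, sum_digits_pow_sub_one]
    omega
  have wt1 : wt n 1 = 1 := by
    unfold wt
    rw [Nat.mod_eq_of_lt (by omega),
      sum_digits_small (by norm_num) (by norm_num)]
  have wtc : wt n (2 * 3 ^ m + 1) = 3 := by
    unfold wt
    rw [Nat.mod_eq_of_lt (by rw [hnpow]; omega),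
      sum_digits_add_mul_pow m 1 2 (by omega) (by norm_num),
      sum_digits_small (by norm_num) (by norm_num)]
  have hAc : (3 ^ (m + 1) - 1) * (2 * 3 ^ m + 1) = 3 ^ m + 1 + 2 * (3 ^ n - 1) := by
    rw [hn]
    zify [h1, show (1:ℕ) ≤ 3 ^ (2 * m + 1) from Nat.one_le_pow _ _ (by norm_num)]
    ring
  have wtAc : wt n ((3 ^ (m + 1) - 1) * (2 * 3 ^ m + 1)) = 2 := by
    unfold wt
    rw [hAc, Nat.add_mul_mod_self_right,
      Nat.mod_eq_of_lt (by rw [hnpow]; omega)]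
    have h : 3 ^ m + 1 = 1 * 3 ^ m + 1 := by ring
    rw [h, sum_digits_add_mul_pow m 1 1 (by omega) (by norm_num),
      sum_digits_small (by norm_num) (by norm_num)]
  have h2Ac : 2 * (3 ^ (m + 1) - 1) * (2 * 3 ^ m + 1)
      = 2 * 3 ^ m + 2 + 4 * (3 ^ n - 1) := by
    rw [hn]
    zify [h1, show (1:ℕ) ≤ 3 ^ (2 * m + 1) from Nat.one_le_pow _ _ (by norm_num)]
    ring
  have wt2Ac : wt n (2 * (3 ^ (m + 1) - 1) * (2 * 3 ^ m + 1)) = 4 := by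
    unfold wt
    rw [h2Ac, Nat.add_mul_mod_self_right,
      Nat.mod_eq_of_lt (by rw [hnpow]; omega),
      sum_digits_add_mul_pow m 2 2 (by omega) (by norm_num),
      sum_digits_small (by norm_num) (by norm_num)]
  obtain ⟨i, _, hc | hc⟩ := hj
  · rw [hred 1 ⟨i, by simpa using hc⟩]
    unfold H
    rw [mul_one, mul_one, wt1, wtA, wt2A]
    push_cast
    ring
  · rw [hred (2 * 3 ^ m + 1) ⟨i, hc⟩]
    unfold H
    rw [wtc, wtAc, wt2Ac]
    norm_num
end

section
/- Let n ≥ 1 and for integers a with residue ā modulo 3^n - 1, let wt denote the ternary digit sum of the residue. For any i ≥ 0 and any a, wt(a + 2·3^i) - wt(2(a + 2·3^i)) ≥ wt(a) - wt(2a) - 2, where all quantities are computed on residues modulo 3^n - 1. -/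
/-- `wtZ n a` is the ternary digit sum of the residue of the integer `a`
modulo `3^n - 1`, the residue being taken in `[0, 3^n - 2]`. -/
def wtZ (n : ℕ) (a : ℤ) : ℤ :=
  ((Nat.digits 3 (a % ((3 : ℤ) ^ n - 1)).toNat).sum : ℤ)

namespace WtAux

def w (x : ℕ) : ℕ := (Nat.digits 3 x).sum

lemma w_zero : w 0 = 0 := by simp [w]

lemma H1 {d : ℕ} (hd : d < 3) (u : ℕ) : w (d + 3 * u) = d + w u := by
  rcases Nat.eq_zero_or_pos (d + 3 * u) with h | h
  · have h1 : d = 0 := by omega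
    have h2 : u = 0 := by omega
    simp [h1, h2, w_zero]
  · unfold w
    rw [Nat.digits_def' (by norm_num : 1 < 3) h]
    have e1 : (d + 3 * u) % 3 = d := by omega
    have e2 : (d + 3 * u) / 3 = u := by omega
    rw [e1, e2, List.sum_cons]

lemma wd {d : ℕ} (hd : d < 3) : w d = d := by
  have := H1 hd 0
  simpa [w_zero] using this

def P3 (c : ℕ) : Prop := ∃ j, c = 3 ^ j

lemma P3.one : P3 1 := ⟨0, rfl⟩
lemma P3.mul3 {c : ℕ} (h : P3 c) : P3 (3 * c) := by
  obtain ⟨j, rfl⟩ := h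
  exact ⟨j + 1, by ring⟩

lemma P3.pos {c : ℕ} (h : P3 c) : 1 ≤ c := by
  obtain ⟨j, rfl⟩ := h
  exact Nat.one_le_pow _ _ (by norm_num)

lemma P3.odd {c : ℕ} (h : P3 c) : c % 2 = 1 := by
  obtain ⟨j, rfl⟩ := h
  have := Nat.pow_mod 3 j 2
  simpa using this

lemma H2' : ∀ j x y : ℕ, x < 3 ^ j → w (x + 3 ^ j * y) = w x + w y := by
  intro j
  induction j with
  | zero =>
    intro x y hx
    interval_cases x
    simp [w_zero]
  | succ j ih =>
    intro x y hx
    have hx3 : x % 3 < 3 := Nat.mod_lt _ (by norm_num)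
    have hdiv : x / 3 < 3 ^ j := by
      rw [pow_succ] at hx
      omega
    have hdecomp : x + 3 ^ (j + 1) * y = x % 3 + 3 * (x / 3 + 3 ^ j * y) := by
      have h1 : 3 ^ (j + 1) * y = 3 * (3 ^ j * y) := by ring
      omega
    rw [hdecomp, H1 hx3, ih _ y hdiv]
    conv_rhs => rw [show x = x % 3 + 3 * (x / 3) by omega, H1 hx3]
    omega

lemma H2 {c : ℕ} (hc : P3 c) {x : ℕ} (hx : x < c) (y : ℕ) : w (x + c * y) = w x + w y := by
  obtain ⟨j, rfl⟩ := hc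
  exact H2' j x y hx

lemma wshift {c : ℕ} (hc : P3 c) (y : ℕ) : w (c * y) = w y := by
  have := H2 hc (x := 0) hc.pos y
  simpa [w_zero] using this

lemma H4 : ∀ x : ℕ, w (x + 1) ≤ w x + 1 := by
  intro x
  induction x using Nat.strong_induction_on with
  | _ x ih =>
    have h3 : x % 3 = 0 ∨ x % 3 = 1 ∨ x % 3 = 2 := by omega
    rcases h3 with h | h | h
    · have e1 : x + 1 = 1 + 3 * (x / 3) := by omega
      have e0 : x = 0 + 3 * (x / 3) := by omega
      rw [e1, H1 (by norm_num)]
      conv_rhs => rw [e0, H1 (by norm_num)]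
      omega
    · have e1 : x + 1 = 2 + 3 * (x / 3) := by omega
      have e0 : x = 1 + 3 * (x / 3) := by omega
      rw [e1, H1 (by norm_num)]
      conv_rhs => rw [e0, H1 (by norm_num)]
      omega
    · have e1 : x + 1 = 0 + 3 * (x / 3 + 1) := by omega
      have e0 : x = 2 + 3 * (x / 3) := by omega
      have hlt : x / 3 < x := by omega
      have := ih (x / 3) hlt
      rw [e1, H1 (by norm_num)]
      conv_rhs => rw [e0, H1 (by norm_num)]
      omega

lemma H4b (x : ℕ) : w (x + 3) ≤ w x + 1 := by
  have e1 : x + 3 = x % 3 + 3 * (x / 3 + 1) := by omega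
  have e0 : x = x % 3 + 3 * (x / 3) := by omega
  have h3 : x % 3 < 3 := by omega
  rw [e1, H1 h3]
  conv_rhs => rw [e0, H1 h3]
  have := H4 (x / 3)
  omega

lemma ADD4raw (x : ℕ) : w (x + 4) ≤ w x + 2 := by
  have e : x + 4 = (x + 1) + 3 := by omega
  rw [e]
  have := H4b (x + 1)
  have := H4 x
  omega

/-- reduction mod `c - 1` (with `c` a power of 3) does not increase digit sum,
for `x < 2*(c-1)`. -/
lemma U2 {c : ℕ} (hc : P3 c) (hc2 : 2 ≤ c) {x : ℕ} (hx : x < 2 * (c - 1)) :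
    w (x % (c - 1)) ≤ w x := by
  rcases lt_or_ge x (c - 1) with h | h
  · rw [Nat.mod_eq_of_lt h]
  · rcases eq_or_lt_of_le h with h1 | h1
    · rw [← h1, Nat.mod_self]
      simp [w_zero]
    · have hz : x = (x - c) + c * 1 := by omega
      have hzlt : x - c < c := by omega
      have e1 : w x = w (x - c) + 1 := by
        conv_lhs => rw [hz]
        rw [H2 hc hzlt 1, wd (show (1:ℕ) < 3 by norm_num)]
      have e2 : x % (c - 1) = (x - c) + 1 := by
        rw [Nat.mod_eq_sub_mod (by omega : c - 1 ≤ x),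
          Nat.mod_eq_of_lt (by omega : x - (c - 1) < c - 1)]
        omega
      rw [e2, e1]
      exact H4 _
lemma rot (n : ℕ) (hn : 1 ≤ n) (u : ℕ) (hu : u < 3 ^ n - 1) :
    w ((3 * u) % (3 ^ n - 1)) = w u := by
  have hp3 : 3 ^ n = 3 * 3 ^ (n - 1) := by
    conv_lhs => rw [show n = (n - 1) + 1 by omega]
    ring
  set p := 3 ^ (n - 1) with hp
  have hppos : 1 ≤ p := Nat.one_le_pow _ _ (by norm_num)
  have hus : u % p + p * (u / p) = u := Nat.mod_add_div u p
  have hslt : u % p < p := Nat.mod_lt _ (by omega)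
  have hq2 : u / p ≤ 2 := by
    have : u / p < 3 := by
      rw [Nat.div_lt_iff_lt_mul (by omega)]
      omega
    omega
  set q := u / p with hqd
  set s := u % p with hsd
  have key : (3 * u) % (3 ^ n - 1) = q + 3 * s := by
    have e : 3 * u = (q + 3 * s) + (3 ^ n - 1) * q := by
      have h1 : (3 ^ n - 1) * q = 3 * (p * q) - q := by
        rw [hp3]
        have h2 : q ≤ 3 * (p * q) := by nlinarith
        zify [show 1 ≤ 3 * p by omega, h2]
        ring
      have h2 : q ≤ p * q := Nat.le_mul_of_pos_left _ (by omega)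
      omega
    rw [e, Nat.add_mul_mod_self_left]
    apply Nat.mod_eq_of_lt
    -- q + 3 * s < 3^n - 1
    interval_cases q <;> omega
  rw [key, H1 (by omega : q < 3)]
  conv_rhs => rw [← hus]
  rw [H2 ⟨n - 1, hp⟩ hslt q, wd (by omega : q < 3)]
  omega

lemma keyM1 (K M r : ℕ) (hK : P3 K) (hM : M + 1 = 9 * K) (hr : r + 1 = M) :
    w r + w ((2 * r + 4) % M) ≤ w ((r + 2) % M) + w ((2 * r) % M) + 2 := by
  have hK1 : 1 ≤ K := hK.pos
  have hwr : w r = 3 + w (K - 1) := by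
    have e : r = 1 + 3 * (2 + 3 * (K - 1)) := by omega
    rw [e, H1 (by omega), H1 (by omega)]
    omega
  have h1 : (r + 2) % M = 1 := by
    have e : r + 2 = M + 1 := by omega
    rw [e, Nat.add_mod_left, Nat.mod_eq_of_lt (by omega)]
  have h2 : (2 * r) % M = M - 2 := by
    have e : 2 * r = M + (M - 2) := by omega
    rw [e, Nat.add_mod_left, Nat.mod_eq_of_lt (by omega)]
  have h3 : (2 * r + 4) % M = 2 := by
    have e : 2 * r + 4 = M + (M + 2) := by omega
    rw [e, Nat.add_mod_left, Nat.add_mod_left, Nat.mod_eq_of_lt (by omega)]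
  have hwM2 : w (M - 2) = 2 + w (K - 1) := by
    have e : M - 2 = 0 + 3 * (2 + 3 * (K - 1)) := by omega
    rw [e, H1 (by omega), H1 (by omega)]
    omega
  rw [h1, h2, h3, hwr, hwM2, wd (by omega : (1:ℕ) < 3), wd (by omega : (2:ℕ) < 3)]
  omega

lemma keyD0spec (K M r : ℕ) (hK : P3 K) (hM : M + 1 = 9 * K) (hr : r + 2 = M) :
    w r + w ((2 * r + 4) % M) ≤ w ((r + 2) % M) + w ((2 * r) % M) + 2 := by
  have hK1 : 1 ≤ K := hK.pos
  have hwr : w r = 2 + w (K - 1) := by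
    have e : r = 0 + 3 * (2 + 3 * (K - 1)) := by omega
    rw [e, H1 (by omega), H1 (by omega)]
    omega
  have h1 : (r + 2) % M = 0 := by rw [hr, Nat.mod_self]
  have h2 : (2 * r) % M = M - 4 := by
    have e : 2 * r = M + (M - 4) := by omega
    rw [e, Nat.add_mod_left, Nat.mod_eq_of_lt (by omega)]
  have h3 : (2 * r + 4) % M = 0 := by
    have e : 2 * r + 4 = M + M := by omega
    rw [e, Nat.add_mod_left, Nat.mod_self]
  have hwM4 : w (M - 4) = 2 + w (K - 1) := by
    have e : M - 4 = 4 + 9 * (K - 1) := by omega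
    rw [e, show (4 : ℕ) + 9 * (K - 1) = 4 + 3 ^ 2 * (K - 1) by norm_num,
      H2' 2 4 (K - 1) (by norm_num), show (4:ℕ) = 1 + 3 * 1 by norm_num, H1 (by omega),
      wd (by omega : (1:ℕ) < 3)]
  rw [h1, h2, h3, hwr, hwM4, w_zero]
  omega

lemma caseT0 (K d e m M r : ℕ) (hK : P3 K) (hd1 : 1 ≤ d) (hd2 : d ≤ 2) (he : e ≤ 1)
    (hm : m < K) (hM : M + 1 = 9 * K) (hr : r = d + 3 * e + 9 * m) :
    w r + w ((2 * r + 4) % M) ≤ w ((r + 2) % M) + w ((2 * r) % M) + 2 := by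
  have hK1 : 1 ≤ K := hK.pos
  have hM9 : P3 (M + 1) := by
    rw [hM, show 9 * K = 3 * (3 * K) by ring]
    exact (hK.mul3).mul3
  have hwr : w r = d + (e + w m) := by
    have e0 : r = d + 3 * (e + 3 * m) := by omega
    rw [e0, H1 (by omega), H1 (by omega)]
  have hlt : r + 2 < M := by omega
  have hwr2 : w ((r + 2) % M) = (d - 1) + ((e + 1) + w m) := by
    rw [Nat.mod_eq_of_lt hlt]
    have e1 : r + 2 = (d - 1) + 3 * ((e + 1) + 3 * m) := by omega
    rw [e1, H1 (by omega), H1 (by omega)]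
  have ha : w ((2 * r + 4) % M) ≤ w ((2 * r) % M) + 2 := by
    rw [← Nat.mod_add_mod]
    have hy : (2 * r) % M < M := Nat.mod_lt _ (by omega)
    have hu2 := U2 hM9 (by omega) (x := (2 * r) % M + 4) (by omega)
    have := ADD4raw ((2 * r) % M)
    simp only [Nat.add_sub_cancel] at hu2
    omega
  omega
lemma caseT (q K d e m M r : ℕ) (hq : P3 q) (hK : P3 K) (hd1 : 1 ≤ d) (hd2 : d ≤ 2)
    (he : e ≤ 1) (hm : m < K) (hM : M + 1 = 27 * q * K)
    (hr : r = d + 3 * (3 * q - 1) + 9 * q * (e + 3 * m)) :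
    w r + w ((2 * r + 4) % M) ≤ w ((r + 2) % M) + w ((2 * r) % M) + 2 := by
  have hq1 : 1 ≤ q := hq.pos
  have hK1 : 1 ≤ K := hK.pos
  have hKodd : K % 2 = 1 := hK.odd
  obtain ⟨Q, rfl⟩ : ∃ Q, q = Q + 1 := ⟨q - 1, by omega⟩
  have hq3 : P3 (3 * (Q + 1)) := hq.mul3
  have hq9 : P3 (9 * (Q + 1)) := by
    rw [show 9 * (Q + 1) = 3 * (3 * (Q + 1)) by ring]
    exact hq3.mul3
  have hp3 : P3 3 := by
    rw [show (3:ℕ) = 3 * 1 by ring]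
    exact P3.one.mul3
  have hMexp : 27 * (Q + 1) * K = 27 * (Q * K) + 27 * K := by ring
  interval_cases d <;> interval_cases e
  -- d = 1, e = 0 --------------------------------------------------------
  · have hrE : 9 * (Q + 1) * (0 + 3 * m) = 27 * (Q * m) + 27 * m := by ring
    have hwr : w r = 3 + (w Q + w m) := by
      have e0 : r = 1 + 3 * ((2 + 3 * Q) + (3 * (Q + 1)) * (3 * m)) := by
        have hE : 3 * ((2 + 3 * Q) + (3 * (Q + 1)) * (3 * m))
            = 6 + 9 * Q + (27 * (Q * m) + 27 * m) := by ring
        omega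
      rw [e0, H1 (by omega), H2 hq3 (by omega) (3 * m), H1 (by omega), wshift hp3 m]
      omega
    have hr2 : r + 2 = 0 + (9 * (Q + 1)) * (1 + 3 * m) := by
      have hE : (9 * (Q + 1)) * (1 + 3 * m) = 9 * Q + 9 + (27 * (Q * m) + 27 * m) := by ring
      omega
    have hr2mul : (9 * (Q + 1)) * ((1 + 3 * m) + 2) ≤ (9 * (Q + 1)) * (3 * K) :=
      Nat.mul_le_mul_left _ (by omega)
    have hr2mulE : (9 * (Q + 1)) * ((1 + 3 * m) + 2)
        = 27 * (Q * m) + 27 * m + 27 * Q + 27 := by ring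
    have hr2mulE2 : (9 * (Q + 1)) * (3 * K) = 27 * (Q * K) + 27 * K := by ring
    have hr2lt : r + 2 < M := by omega
    have hwr2 : w ((r + 2) % M) = 1 + w m := by
      rw [Nat.mod_eq_of_lt hr2lt, hr2, H2 hq9 (by omega) (1 + 3 * m), w_zero,
        H1 (by omega)]
      omega
    rcases lt_or_ge (2 * (3 * m + 0 + 1)) (3 * K) with hc | hc
    · -- no wraparound
      have hA : 2 * r + 4 = 0 + (9 * (Q + 1)) * (2 + 3 * (2 * m)) := by
        have hE : (9 * (Q + 1)) * (2 + 3 * (2 * m))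
            = 18 * Q + 18 + 54 * (Q * m) + 54 * m := by ring
        omega
      have hAmul : (9 * (Q + 1)) * ((2 + 3 * (2 * m)) + 1) ≤ (9 * (Q + 1)) * (3 * K) :=
        Nat.mul_le_mul_left _ (by omega)
      have hAmulE : (9 * (Q + 1)) * ((2 + 3 * (2 * m)) + 1)
          = 54 * (Q * m) + 54 * m + 27 * Q + 27 := by ring
      have hAlt : 2 * r + 4 < M := by omega
      have hwA : w ((2 * r + 4) % M) = 2 + w (2 * m) := by
        rw [Nat.mod_eq_of_lt hAlt, hA, H2 hq9 (by omega) (2 + 3 * (2 * m)), w_zero,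
          H1 (by omega)]
        omega
      have hB : 2 * r = 2 + 3 * (1 + 3 * (Q + (Q + 1) * (1 + 3 * (2 * m)))) := by
        have hE : 3 * (1 + 3 * (Q + (Q + 1) * (1 + 3 * (2 * m))))
            = 12 + 18 * Q + 54 * (Q * m) + 54 * m := by ring
        omega
      have hwB : w ((2 * r) % M) = 4 + (w Q + w (2 * m)) := by
        rw [Nat.mod_eq_of_lt (by omega : 2 * r < M), hB, H1 (by omega), H1 (by omega),
          H2 hq (by omega) (1 + 3 * (2 * m)), H1 (by omega)]
        omega
      omega
    · -- wraparound
      have h3K : 3 * K ≤ 6 * m := by omega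
      obtain ⟨s, hs⟩ : ∃ s, 2 * m = K + s := ⟨2 * m - K, by omega⟩
      have hrel : 2 * (Q * m) = Q * K + Q * s := by
        have h := congrArg (fun z => Q * z) hs
        have h1 : Q * (2 * m) = 2 * (Q * m) := by ring
        have h2 : Q * (K + s) = Q * K + Q * s := by ring
        omega
      have hA : 2 * r + 4 = M + (1 + (9 * (Q + 1)) * (2 + 3 * s)) := by
        have hE : (9 * (Q + 1)) * (2 + 3 * s) = 18 * Q + 18 + 27 * (Q * s) + 27 * s := by
          ring
        omega
      have hsb : (2 + 3 * s) + 4 ≤ 3 * K := by omega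
      have hAmul : (9 * (Q + 1)) * ((2 + 3 * s) + 4) ≤ (9 * (Q + 1)) * (3 * K) :=
        Nat.mul_le_mul_left _ hsb
      have hAmulE : (9 * (Q + 1)) * ((2 + 3 * s) + 4)
          = 27 * (Q * s) + 27 * s + 18 * Q + 18 + 36 * (Q + 1) := by ring
      have hA1lt : 1 + (9 * (Q + 1)) * (2 + 3 * s) < M := by
        have hE : (9 * (Q + 1)) * (2 + 3 * s) = 18 * Q + 18 + 27 * (Q * s) + 27 * s := by
          ring
        omega
      have hwA : w ((2 * r + 4) % M) = 3 + w s := by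
        rw [hA, Nat.add_mod_left, Nat.mod_eq_of_lt hA1lt,
          H2 hq9 (by omega) (2 + 3 * s), wd (by omega : (1:ℕ) < 3), H1 (by omega)]
        omega
      have hB : 2 * r = M + (3 * ((2 + 3 * Q) + (3 * (Q + 1)) * (1 + 3 * s))) := by
        have hE : 3 * ((2 + 3 * Q) + (3 * (Q + 1)) * (1 + 3 * s))
            = 15 + 18 * Q + 27 * (Q * s) + 27 * s := by ring
        omega
      have hB2lt : 3 * ((2 + 3 * Q) + (3 * (Q + 1)) * (1 + 3 * s)) < M := by
        have hE : 3 * ((2 + 3 * Q) + (3 * (Q + 1)) * (1 + 3 * s))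
            = 15 + 18 * Q + 27 * (Q * s) + 27 * s := by ring
        omega
      have hwB : w ((2 * r) % M) = 3 + (w Q + w s) := by
        rw [hB, Nat.add_mod_left, Nat.mod_eq_of_lt hB2lt, wshift hp3,
          H2 hq3 (by omega) (1 + 3 * s), H1 (by omega), H1 (by omega)]
        omega
      omega
  -- d = 1, e = 1 --------------------------------------------------------
  · have hrE : 9 * (Q + 1) * (1 + 3 * m) = 9 * Q + 9 + 27 * (Q * m) + 27 * m := by ring
    have hwr : w r = 4 + (w Q + w m) := by
      have e0 : r = 1 + 3 * ((2 + 3 * Q) + (3 * (Q + 1)) * (1 + 3 * m)) := by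
        have hE : 3 * ((2 + 3 * Q) + (3 * (Q + 1)) * (1 + 3 * m))
            = 6 + 9 * Q + (9 * Q + 9 + 27 * (Q * m) + 27 * m) := by ring
        omega
      rw [e0, H1 (by omega), H2 hq3 (by omega) (1 + 3 * m), H1 (by omega), H1 (by omega)]
      omega
    have hr2 : r + 2 = 0 + (9 * (Q + 1)) * (2 + 3 * m) := by
      have hE : (9 * (Q + 1)) * (2 + 3 * m) = 18 * Q + 18 + (27 * (Q * m) + 27 * m) := by ring
      omega
    have hr2mul : (9 * (Q + 1)) * ((2 + 3 * m) + 1) ≤ (9 * (Q + 1)) * (3 * K) :=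
      Nat.mul_le_mul_left _ (by omega)
    have hr2mulE : (9 * (Q + 1)) * ((2 + 3 * m) + 1)
        = 27 * (Q * m) + 27 * m + 27 * Q + 27 := by ring
    have hr2mulE2 : (9 * (Q + 1)) * (3 * K) = 27 * (Q * K) + 27 * K := by ring
    have hr2lt : r + 2 < M := by omega
    have hwr2 : w ((r + 2) % M) = 2 + w m := by
      rw [Nat.mod_eq_of_lt hr2lt, hr2, H2 hq9 (by omega) (2 + 3 * m), w_zero,
        H1 (by omega)]
      omega
    rcases lt_or_ge (2 * (3 * m + 1 + 1)) (3 * K) with hc | hc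
    · -- no wraparound
      have hA : 2 * r + 4 = 0 + (9 * (Q + 1)) * (1 + 3 * (2 * m + 1)) := by
        have hE : (9 * (Q + 1)) * (1 + 3 * (2 * m + 1))
            = 36 * Q + 36 + 54 * (Q * m) + 54 * m := by ring
        omega
      have hAmul : (9 * (Q + 1)) * ((1 + 3 * (2 * m + 1)) + 1) ≤ (9 * (Q + 1)) * (3 * K) :=
        Nat.mul_le_mul_left _ (by omega)
      have hAmulE : (9 * (Q + 1)) * ((1 + 3 * (2 * m + 1)) + 1)
          = 54 * (Q * m) + 54 * m + 45 * Q + 45 := by ring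
      have hAlt : 2 * r + 4 < M := by omega
      have hwA : w ((2 * r + 4) % M) = 1 + w (2 * m + 1) := by
        rw [Nat.mod_eq_of_lt hAlt, hA, H2 hq9 (by omega) (1 + 3 * (2 * m + 1)), w_zero,
          H1 (by omega)]
        omega
      have hB : 2 * r = 2 + 3 * (1 + 3 * (Q + (Q + 1) * (3 * (2 * m + 1)))) := by
        have hE : 3 * (1 + 3 * (Q + (Q + 1) * (3 * (2 * m + 1))))
            = 30 + 36 * Q + 54 * (Q * m) + 54 * m := by ring
        omega
      have hwB : w ((2 * r) % M) = 3 + (w Q + w (2 * m + 1)) := by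
        rw [Nat.mod_eq_of_lt (by omega : 2 * r < M), hB, H1 (by omega), H1 (by omega),
          H2 hq (by omega) (3 * (2 * m + 1)), wshift hp3]
        omega
      omega
    · -- wraparound
      have h3K : 3 * K ≤ 6 * m + 3 := by omega
      obtain ⟨s, hs⟩ : ∃ s, 2 * m + 1 = K + s := ⟨2 * m + 1 - K, by omega⟩
      have hrel : 2 * (Q * m) + Q = Q * K + Q * s := by
        have h1 : Q * (2 * m + 1) = 2 * (Q * m) + Q := by ring
        have h2 : Q * (K + s) = Q * K + Q * s := by ring
        have h := congrArg (fun z => Q * z) hs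
        omega
      have hA : 2 * r + 4 = M + (1 + (9 * (Q + 1)) * (1 + 3 * s)) := by
        have hE : (9 * (Q + 1)) * (1 + 3 * s) = 9 * Q + 9 + 27 * (Q * s) + 27 * s := by ring
        omega
      have hsb : (1 + 3 * s) + 2 ≤ 3 * K := by omega
      have hAmul : (9 * (Q + 1)) * ((1 + 3 * s) + 2) ≤ (9 * (Q + 1)) * (3 * K) :=
        Nat.mul_le_mul_left _ hsb
      have hAmulE : (9 * (Q + 1)) * ((1 + 3 * s) + 2)
          = 27 * (Q * s) + 27 * s + 9 * Q + 9 + 18 * (Q + 1) := by ring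
      have hA1lt : 1 + (9 * (Q + 1)) * (1 + 3 * s) < M := by
        have hE : (9 * (Q + 1)) * (1 + 3 * s) = 9 * Q + 9 + 27 * (Q * s) + 27 * s := by ring
        omega
      have hwA : w ((2 * r + 4) % M) = 2 + w s := by
        rw [hA, Nat.add_mod_left, Nat.mod_eq_of_lt hA1lt,
          H2 hq9 (by omega) (1 + 3 * s), wd (by omega : (1:ℕ) < 3), H1 (by omega)]
        omega
      have hB : 2 * r = M + (3 * ((2 + 3 * Q) + (3 * (Q + 1)) * (3 * s))) := by
        have hE : 3 * ((2 + 3 * Q) + (3 * (Q + 1)) * (3 * s))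
            = 6 + 9 * Q + 27 * (Q * s) + 27 * s := by ring
        omega
      have hB2lt : 3 * ((2 + 3 * Q) + (3 * (Q + 1)) * (3 * s)) < M := by
        have hE : 3 * ((2 + 3 * Q) + (3 * (Q + 1)) * (3 * s))
            = 6 + 9 * Q + 27 * (Q * s) + 27 * s := by ring
        omega
      have hwB : w ((2 * r) % M) = 2 + (w Q + w s) := by
        rw [hB, Nat.add_mod_left, Nat.mod_eq_of_lt hB2lt, wshift hp3,
          H2 hq3 (by omega) (3 * s), H1 (by omega), wshift hp3]
        omega
      omega
  -- d = 2, e = 0 --------------------------------------------------------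
  · have hrE : 9 * (Q + 1) * (0 + 3 * m) = 27 * (Q * m) + 27 * m := by ring
    have hwr : w r = 4 + (w Q + w m) := by
      have e0 : r = 2 + 3 * ((2 + 3 * Q) + (3 * (Q + 1)) * (3 * m)) := by
        have hE : 3 * ((2 + 3 * Q) + (3 * (Q + 1)) * (3 * m))
            = 6 + 9 * Q + (27 * (Q * m) + 27 * m) := by ring
        omega
      rw [e0, H1 (by omega), H2 hq3 (by omega) (3 * m), H1 (by omega), wshift hp3 m]
      omega
    have hr2 : r + 2 = 1 + (9 * (Q + 1)) * (1 + 3 * m) := by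
      have hE : (9 * (Q + 1)) * (1 + 3 * m) = 9 * Q + 9 + (27 * (Q * m) + 27 * m) := by ring
      omega
    have hr2mul : (9 * (Q + 1)) * ((1 + 3 * m) + 2) ≤ (9 * (Q + 1)) * (3 * K) :=
      Nat.mul_le_mul_left _ (by omega)
    have hr2mulE : (9 * (Q + 1)) * ((1 + 3 * m) + 2)
        = 27 * (Q * m) + 27 * m + 27 * Q + 27 := by ring
    have hr2mulE2 : (9 * (Q + 1)) * (3 * K) = 27 * (Q * K) + 27 * K := by ring
    have hr2lt : r + 2 < M := by omega
    have hwr2 : w ((r + 2) % M) = 2 + w m := by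
      rw [Nat.mod_eq_of_lt hr2lt, hr2, H2 hq9 (by omega) (1 + 3 * m),
        wd (by omega : (1:ℕ) < 3), H1 (by omega)]
      omega
    rcases lt_or_ge (2 * (3 * m + 0 + 1)) (3 * K) with hc | hc
    · -- no wraparound
      have hA : 2 * r + 4 = 2 + (9 * (Q + 1)) * (2 + 3 * (2 * m)) := by
        have hE : (9 * (Q + 1)) * (2 + 3 * (2 * m))
            = 18 * Q + 18 + 54 * (Q * m) + 54 * m := by ring
        omega
      have hAmul : (9 * (Q + 1)) * ((2 + 3 * (2 * m)) + 1) ≤ (9 * (Q + 1)) * (3 * K) :=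
        Nat.mul_le_mul_left _ (by omega)
      have hAmulE : (9 * (Q + 1)) * ((2 + 3 * (2 * m)) + 1)
          = 54 * (Q * m) + 54 * m + 27 * Q + 27 := by ring
      have hAlt : 2 * r + 4 < M := by omega
      have hwA : w ((2 * r + 4) % M) = 4 + w (2 * m) := by
        rw [Nat.mod_eq_of_lt hAlt, hA, H2 hq9 (by omega) (2 + 3 * (2 * m)),
          wd (by omega : (2:ℕ) < 3), H1 (by omega)]
        omega
      have hB : 2 * r = 1 + 3 * (2 + 3 * (Q + (Q + 1) * (1 + 3 * (2 * m)))) := by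
        have hE : 3 * (2 + 3 * (Q + (Q + 1) * (1 + 3 * (2 * m))))
            = 15 + 18 * Q + 54 * (Q * m) + 54 * m := by ring
        omega
      have hwB : w ((2 * r) % M) = 4 + (w Q + w (2 * m)) := by
        rw [Nat.mod_eq_of_lt (by omega : 2 * r < M), hB, H1 (by omega), H1 (by omega),
          H2 hq (by omega) (1 + 3 * (2 * m)), H1 (by omega)]
        omega
      omega
    · -- wraparound
      have h3K : 3 * K ≤ 6 * m := by omega
      obtain ⟨s, hs⟩ : ∃ s, 2 * m = K + s := ⟨2 * m - K, by omega⟩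
      have hrel : 2 * (Q * m) = Q * K + Q * s := by
        have h1 : Q * (2 * m) = 2 * (Q * m) := by ring
        have h2 : Q * (K + s) = Q * K + Q * s := by ring
        have h := congrArg (fun z => Q * z) hs
        omega
      have hA : 2 * r + 4 = M + (3 * (1 + (3 * (Q + 1)) * (2 + 3 * s))) := by
        have hE : 3 * (1 + (3 * (Q + 1)) * (2 + 3 * s))
            = 21 + 18 * Q + 27 * (Q * s) + 27 * s := by ring
        omega
      have hsb : (s + 2) ≤ K := by omega
      have hAmul : (27 * (Q + 1)) * (s + 2) ≤ (27 * (Q + 1)) * K :=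
        Nat.mul_le_mul_left _ hsb
      have hAmulE : (27 * (Q + 1)) * (s + 2)
          = 27 * (Q * s) + 27 * s + 54 * Q + 54 := by ring
      have hAmulE2 : (27 * (Q + 1)) * K = 27 * (Q * K) + 27 * K := by ring
      have hA1lt : 3 * (1 + (3 * (Q + 1)) * (2 + 3 * s)) < M := by
        have hE : 3 * (1 + (3 * (Q + 1)) * (2 + 3 * s))
            = 21 + 18 * Q + 27 * (Q * s) + 27 * s := by ring
        omega
      have hwA : w ((2 * r + 4) % M) = 3 + w s := by
        rw [hA, Nat.add_mod_left, Nat.mod_eq_of_lt hA1lt, wshift hp3,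
          H2 hq3 (by omega) (2 + 3 * s), wd (by omega : (1:ℕ) < 3), H1 (by omega)]
        omega
      have hB : 2 * r = M + ((2 + 3 * (2 + 3 * Q)) + (9 * (Q + 1)) * (1 + 3 * s)) := by
        have hE : (9 * (Q + 1)) * (1 + 3 * s) = 9 * Q + 9 + 27 * (Q * s) + 27 * s := by ring
        omega
      have hB2lt : (2 + 3 * (2 + 3 * Q)) + (9 * (Q + 1)) * (1 + 3 * s) < M := by
        have hE : (9 * (Q + 1)) * (1 + 3 * s) = 9 * Q + 9 + 27 * (Q * s) + 27 * s := by ring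
        omega
      have hwB : w ((2 * r) % M) = 5 + (w Q + w s) := by
        rw [hB, Nat.add_mod_left, Nat.mod_eq_of_lt hB2lt,
          H2 hq9 (by omega) (1 + 3 * s), H1 (by omega), H1 (by omega), H1 (by omega)]
        omega
      omega
  -- d = 2, e = 1 --------------------------------------------------------
  · have hrE : 9 * (Q + 1) * (1 + 3 * m) = 9 * Q + 9 + 27 * (Q * m) + 27 * m := by ring
    have hwr : w r = 5 + (w Q + w m) := by
      have e0 : r = 2 + 3 * ((2 + 3 * Q) + (3 * (Q + 1)) * (1 + 3 * m)) := by
        have hE : 3 * ((2 + 3 * Q) + (3 * (Q + 1)) * (1 + 3 * m))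
            = 6 + 9 * Q + (9 * Q + 9 + 27 * (Q * m) + 27 * m) := by ring
        omega
      rw [e0, H1 (by omega), H2 hq3 (by omega) (1 + 3 * m), H1 (by omega), H1 (by omega)]
      omega
    have hr2 : r + 2 = 1 + (9 * (Q + 1)) * (2 + 3 * m) := by
      have hE : (9 * (Q + 1)) * (2 + 3 * m) = 18 * Q + 18 + (27 * (Q * m) + 27 * m) := by ring
      omega
    have hr2mul : (9 * (Q + 1)) * ((2 + 3 * m) + 1) ≤ (9 * (Q + 1)) * (3 * K) :=
      Nat.mul_le_mul_left _ (by omega)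
    have hr2mulE : (9 * (Q + 1)) * ((2 + 3 * m) + 1)
        = 27 * (Q * m) + 27 * m + 27 * Q + 27 := by ring
    have hr2mulE2 : (9 * (Q + 1)) * (3 * K) = 27 * (Q * K) + 27 * K := by ring
    have hr2lt : r + 2 < M := by omega
    have hwr2 : w ((r + 2) % M) = 3 + w m := by
      rw [Nat.mod_eq_of_lt hr2lt, hr2, H2 hq9 (by omega) (2 + 3 * m),
        wd (by omega : (1:ℕ) < 3), H1 (by omega)]
      omega
    rcases lt_or_ge (2 * (3 * m + 1 + 1)) (3 * K) with hc | hc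
    · -- no wraparound
      have hA : 2 * r + 4 = 2 + (9 * (Q + 1)) * (1 + 3 * (2 * m + 1)) := by
        have hE : (9 * (Q + 1)) * (1 + 3 * (2 * m + 1))
            = 36 * Q + 36 + 54 * (Q * m) + 54 * m := by ring
        omega
      have hAmul : (9 * (Q + 1)) * ((1 + 3 * (2 * m + 1)) + 1) ≤ (9 * (Q + 1)) * (3 * K) :=
        Nat.mul_le_mul_left _ (by omega)
      have hAmulE : (9 * (Q + 1)) * ((1 + 3 * (2 * m + 1)) + 1)
          = 54 * (Q * m) + 54 * m + 45 * Q + 45 := by ring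
      have hAlt : 2 * r + 4 < M := by omega
      have hwA : w ((2 * r + 4) % M) = 3 + w (2 * m + 1) := by
        rw [Nat.mod_eq_of_lt hAlt, hA, H2 hq9 (by omega) (1 + 3 * (2 * m + 1)),
          wd (by omega : (2:ℕ) < 3), H1 (by omega)]
        omega
      have hB : 2 * r = 1 + 3 * (2 + 3 * (Q + (Q + 1) * (3 * (2 * m + 1)))) := by
        have hE : 3 * (2 + 3 * (Q + (Q + 1) * (3 * (2 * m + 1))))
            = 33 + 36 * Q + 54 * (Q * m) + 54 * m := by ring
        omega
      have hwB : w ((2 * r) % M) = 3 + (w Q + w (2 * m + 1)) := by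
        rw [Nat.mod_eq_of_lt (by omega : 2 * r < M), hB, H1 (by omega), H1 (by omega),
          H2 hq (by omega) (3 * (2 * m + 1)), wshift hp3]
        omega
      omega
    · -- wraparound
      have h3K : 3 * K ≤ 6 * m + 3 := by omega
      obtain ⟨s, hs⟩ : ∃ s, 2 * m + 1 = K + s := ⟨2 * m + 1 - K, by omega⟩
      have hrel : 2 * (Q * m) + Q = Q * K + Q * s := by
        have h1 : Q * (2 * m + 1) = 2 * (Q * m) + Q := by ring
        have h2 : Q * (K + s) = Q * K + Q * s := by ring
        have h := congrArg (fun z => Q * z) hs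
        omega
      have hA : 2 * r + 4 = M + (3 * (1 + (3 * (Q + 1)) * (1 + 3 * s))) := by
        have hE : 3 * (1 + (3 * (Q + 1)) * (1 + 3 * s))
            = 12 + 9 * Q + 27 * (Q * s) + 27 * s := by ring
        omega
      have hsb : (s + 1) ≤ K := by omega
      have hAmul : (27 * (Q + 1)) * (s + 1) ≤ (27 * (Q + 1)) * K :=
        Nat.mul_le_mul_left _ hsb
      have hAmulE : (27 * (Q + 1)) * (s + 1)
          = 27 * (Q * s) + 27 * s + 27 * Q + 27 := by ring
      have hAmulE2 : (27 * (Q + 1)) * K = 27 * (Q * K) + 27 * K := by ring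
      have hA1lt : 3 * (1 + (3 * (Q + 1)) * (1 + 3 * s)) < M := by
        have hE : 3 * (1 + (3 * (Q + 1)) * (1 + 3 * s))
            = 12 + 9 * Q + 27 * (Q * s) + 27 * s := by ring
        omega
      have hwA : w ((2 * r + 4) % M) = 2 + w s := by
        rw [hA, Nat.add_mod_left, Nat.mod_eq_of_lt hA1lt, wshift hp3,
          H2 hq3 (by omega) (1 + 3 * s), wd (by omega : (1:ℕ) < 3), H1 (by omega)]
        omega
      have hB : 2 * r = M + ((2 + 3 * (2 + 3 * Q)) + (9 * (Q + 1)) * (3 * s)) := by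
        have hE : (9 * (Q + 1)) * (3 * s) = 27 * (Q * s) + 27 * s := by ring
        omega
      have hB2lt : (2 + 3 * (2 + 3 * Q)) + (9 * (Q + 1)) * (3 * s) < M := by
        have hE : (9 * (Q + 1)) * (3 * s) = 27 * (Q * s) + 27 * s := by ring
        omega
      have hwB : w ((2 * r) % M) = 4 + (w Q + w s) := by
        rw [hB, Nat.add_mod_left, Nat.mod_eq_of_lt hB2lt,
          H2 hq9 (by omega) (3 * s), H1 (by omega), H1 (by omega), wshift hp3]
        omega
      omega
lemma ADD4M {M : ℕ} (hM : P3 (M + 1)) (hM8 : 8 ≤ M) (y : ℕ) :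
    w ((y + 4) % M) ≤ w (y % M) + 2 := by
  rw [← Nat.mod_add_mod]
  have hy : y % M < M := Nat.mod_lt _ (by omega)
  have hu2 := U2 hM (by omega) (x := y % M + 4) (by omega)
  simp only [Nat.add_sub_cancel] at hu2
  have := ADD4raw (y % M)
  omega

lemma key (n : ℕ) (hn : 1 ≤ n) (r : ℕ) (hr : r < 3 ^ n - 1) :
    w r + w ((2 * r + 4) % (3 ^ n - 1))
      ≤ w ((r + 2) % (3 ^ n - 1)) + w ((2 * r) % (3 ^ n - 1)) + 2 := by
  rcases eq_or_lt_of_le hn with h1 | hn2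
  · have hM : (3:ℕ) ^ n - 1 = 2 := by
      rw [← h1]
      norm_num
    rw [hM] at hr ⊢
    have w1 : w 1 = 1 := wd (by norm_num)
    interval_cases r
    · norm_num [w_zero]
    · norm_num [w_zero, w1]
  · have hn2' : 2 ≤ n := hn2
    have h3n2 : (3:ℕ) ^ n = 9 * 3 ^ (n - 2) := by
      conv_lhs => rw [show n = 2 + (n - 2) by omega]
      rw [pow_add]
      norm_num
    have hK2 : P3 ((3:ℕ) ^ (n - 2)) := ⟨n - 2, rfl⟩
    have hK2pos : 1 ≤ (3:ℕ) ^ (n - 2) := Nat.one_le_pow _ _ (by norm_num)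
    have hM8 : 8 ≤ 3 ^ n - 1 := by omega
    have hMP3 : P3 (3 ^ n - 1 + 1) := by
      have h : 3 ^ n - 1 + 1 = 3 ^ n := by omega
      rw [h]
      exact ⟨n, rfl⟩
    rcases Nat.lt_or_ge (r % 3) 1 with hd0 | hd1
    · -- bottom digit is 0
      rcases eq_or_lt_of_le (show r + 2 ≤ 3 ^ n - 1 by omega) with hsp | hlt
      · exact keyD0spec _ _ _ hK2 (by omega) (by omega)
      · have e1 : (r + 2) % (3 ^ n - 1) = r + 2 := Nat.mod_eq_of_lt hlt
        have e2 : r + 2 = 2 + 3 * (r / 3) := by omega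
        have e3 : r = 0 + 3 * (r / 3) := by omega
        have hw2 : w (r + 2) = 2 + w (r / 3) := by
          rw [e2]
          exact H1 (by norm_num) _
        have hw0 : w r = w (r / 3) := by
          conv_lhs => rw [e3]
          rw [H1 (by norm_num)]
          omega
        have ha := ADD4M hMP3 hM8 (2 * r)
        rw [e1]
        omega
    · -- bottom digit is 1 or 2
      have hu3 : r % 3 + 3 * (r / 3) = r := Nat.mod_add_div r 3
      set u := r / 3 with hud
      have h3n1 : (3:ℕ) ^ n = 3 * 3 ^ (n - 1) := by
        conv_lhs => rw [show n = 1 + (n - 1) by omega]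
        rw [pow_add]
        norm_num
      have hult : u < 3 ^ (n - 1) := by omega
      set t := Nat.findGreatest (fun j => u % 3 ^ j = 3 ^ j - 1) (n - 1) with htd
      have ht : u % 3 ^ t = 3 ^ t - 1 := by
        have h := Nat.findGreatest_spec (P := fun j => u % 3 ^ j = 3 ^ j - 1)
          (Nat.zero_le (n - 1)) (by simp [Nat.mod_one])
        rw [htd]
        exact h
      have htle : t ≤ n - 1 := by
        rw [htd]
        exact Nat.findGreatest_le (n - 1)
      have h3tpos : 1 ≤ (3:ℕ) ^ t := Nat.one_le_pow _ _ (by norm_num)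
      rcases eq_or_lt_of_le htle with hteq | htlt
      · -- t = n - 1 : r = 3^n - 2
        have hmm := Nat.mod_eq_of_lt hult
        rw [hteq] at ht
        exact keyM1 (3 ^ (n - 2)) _ r hK2 (by omega) (by omega)
      · -- t < n - 1
        have h3t1 : (3:ℕ) ^ (t + 1) = 3 * 3 ^ t := by
          rw [pow_succ]
          ring
        have hnot : ¬ (u % 3 ^ (t + 1) = 3 ^ (t + 1) - 1) := by
          have h := Nat.findGreatest_is_greatest (P := fun j => u % 3 ^ j = 3 ^ j - 1)
            (n := n - 1) (k := t + 1) (by omega) (by omega)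
          simpa using h
        set e := (u / 3 ^ t) % 3 with hed
        have he3 : e < 3 := Nat.mod_lt _ (by norm_num)
        have hmps : u % 3 ^ (t + 1) = u % 3 ^ t + 3 ^ t * e := Nat.mod_pow_succ
        have he2 : e ≤ 1 := by
          rcases Nat.lt_or_ge e 2 with h | h
          · omega
          · exfalso
            apply hnot
            have hee : e = 2 := by omega
            rw [hee] at hmps
            omega
        set m := u / 3 ^ (t + 1) with hmd
        have hmad : u % 3 ^ (t + 1) + 3 ^ (t + 1) * m = u := Nat.mod_add_div u (3 ^ (t + 1))
        have hmlt : m < 3 ^ (n - t - 2) := by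
          have hmul : (3:ℕ) ^ (t + 1) * 3 ^ (n - t - 2) = 3 ^ (n - 1) := by
            rw [← pow_add]
            congr 1
            omega
          have hcomm : (3:ℕ) ^ (n - t - 2) * 3 ^ (t + 1) = 3 ^ (t + 1) * 3 ^ (n - t - 2) := by
            ring
          rw [hmd, Nat.div_lt_iff_lt_mul (by positivity)]
          omega
        have hudec : u = (3 ^ t - 1) + 3 ^ t * e + 3 ^ (t + 1) * m := by omega
        rcases Nat.eq_zero_or_pos t with ht0 | ht1
        · -- t = 0
          have h3t0 : (3:ℕ) ^ t = 1 := by rw [ht0, pow_zero]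
          have h3t1' : (3:ℕ) ^ (t + 1) = 3 := by
            rw [ht0]
            norm_num
          have hx : 3 ^ t * e = e := by rw [h3t0]; try ring
          have hy : 3 ^ (t + 1) * m = 3 * m := by rw [h3t1']; try ring
          have hnt : n - t - 2 = n - 2 := by omega
          rw [hnt] at hmlt
          exact caseT0 (3 ^ (n - 2)) (r % 3) e m _ r hK2 (by omega) (by omega) he2 hmlt
            (by omega) (by omega)
        · -- t ≥ 1
          have hq : P3 ((3:ℕ) ^ (t - 1)) := ⟨t - 1, rfl⟩
          have hKt : P3 ((3:ℕ) ^ (n - t - 2)) := ⟨n - t - 2, rfl⟩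
          have hq1 : 1 ≤ (3:ℕ) ^ (t - 1) := Nat.one_le_pow _ _ (by norm_num)
          have hKt1 : 1 ≤ (3:ℕ) ^ (n - t - 2) := Nat.one_le_pow _ _ (by norm_num)
          have h3tq : (3:ℕ) ^ t = 3 * 3 ^ (t - 1) := by
            conv_lhs => rw [show t = 1 + (t - 1) by omega]
            rw [pow_add]
            norm_num
          have h27 : 27 * 3 ^ (t - 1) * 3 ^ (n - t - 2) = 3 ^ n := by
            rw [show (27:ℕ) = 3 ^ 3 by norm_num, ← pow_add, ← pow_add]
            congr 1
            omega
          have hx1 : (3:ℕ) ^ t * e = 3 * (3 ^ (t - 1) * e) := by rw [h3tq]; ring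
          have hx2 : (3:ℕ) ^ (t + 1) * m = 9 * (3 ^ (t - 1) * m) := by
            rw [h3t1, h3tq]; ring
          have hx3 : 9 * 3 ^ (t - 1) * (e + 3 * m)
              = 9 * (3 ^ (t - 1) * e) + 27 * (3 ^ (t - 1) * m) := by ring
          exact caseT (3 ^ (t - 1)) (3 ^ (n - t - 2)) (r % 3) e m _ r hq hKt (by omega)
            (by omega) he2 hmlt (by omega) (by omega)
lemma cast3 (n : ℕ) : ((3 ^ n - 1 : ℕ) : ℤ) = (3 : ℤ) ^ n - 1 := by
  have h : 1 ≤ (3:ℕ) ^ n := Nat.one_le_pow _ _ (by norm_num)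
  rw [Nat.cast_sub h]
  push_cast
  ring

lemma wtZ_eq (n : ℕ) (a : ℤ) :
    wtZ n a = (w ((a % ((3 ^ n - 1 : ℕ) : ℤ)).toNat) : ℤ) := by
  unfold wtZ w
  rw [cast3]

lemma wtZ_congr {n : ℕ} {a b : ℤ} (h : a % ((3:ℤ) ^ n - 1) = b % ((3:ℤ) ^ n - 1)) :
    wtZ n a = wtZ n b := by
  unfold wtZ
  rw [h]

lemma wtZ_natmod (n : ℕ) (hn : 1 ≤ n) (x : ℕ) :
    wtZ n (x : ℤ) = (w (x % (3 ^ n - 1)) : ℤ) := by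
  rw [wtZ_eq]
  have h : ((x : ℤ) % ((3 ^ n - 1 : ℕ) : ℤ)) = ((x % (3 ^ n - 1) : ℕ) : ℤ) :=
    (Int.natCast_mod _ _).symm
  rw [h, Int.toNat_natCast]

lemma Mpos (n : ℕ) (hn : 1 ≤ n) : (2 : ℤ) ≤ (3:ℤ) ^ n - 1 := by
  have h : (3:ℤ) ^ 1 ≤ (3:ℤ) ^ n := pow_le_pow_right₀ (by norm_num) hn
  simp at h
  omega

lemma exists_r (n : ℕ) (hn : 1 ≤ n) (a : ℤ) :
    ∃ r : ℕ, r < 3 ^ n - 1 ∧ a % ((3:ℤ) ^ n - 1) = (r : ℤ) := by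
  have hM := Mpos n hn
  have hMc := cast3 n
  have h1 : a % ((3:ℤ) ^ n - 1) < (3:ℤ) ^ n - 1 := Int.emod_lt_of_pos _ (by omega)
  have h0 : 0 ≤ a % ((3:ℤ) ^ n - 1) := Int.emod_nonneg _ (by omega)
  refine ⟨(a % ((3:ℤ) ^ n - 1)).toNat, by omega, by omega⟩

lemma wtZ_three (n : ℕ) (hn : 1 ≤ n) (a : ℤ) : wtZ n (3 * a) = wtZ n a := by
  obtain ⟨r, hrlt, hre⟩ := exists_r n hn a
  have hM := Mpos n hn
  have hMc := cast3 n
  have hr2 : ((r : ℤ)) % ((3:ℤ) ^ n - 1) = (r : ℤ) :=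
    Int.emod_eq_of_lt (by positivity) (by omega)
  have hmodeq : a ≡ (r : ℤ) [ZMOD (3:ℤ) ^ n - 1] := by
    unfold Int.ModEq
    rw [hre, hr2]
  have h1 : wtZ n (3 * a) = wtZ n ((3 * r : ℕ) : ℤ) := by
    apply wtZ_congr
    have hc : ((3 * r : ℕ) : ℤ) = 3 * (r : ℤ) := by push_cast; ring
    rw [hc]
    exact hmodeq.mul_left 3
  have h2 : wtZ n a = wtZ n ((r : ℕ) : ℤ) := wtZ_congr hmodeq
  rw [h1, h2, wtZ_natmod n hn, wtZ_natmod n hn, Nat.mod_eq_of_lt hrlt,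
    rot n hn r hrlt]

lemma wtZ_pow (n : ℕ) (hn : 1 ≤ n) (i : ℕ) (a : ℤ) : wtZ n (3 ^ i * a) = wtZ n a := by
  induction i with
  | zero => simp
  | succ i ih =>
    have e : (3:ℤ) ^ (i + 1) * a = 3 * (3 ^ i * a) := by ring
    rw [e, wtZ_three n hn, ih]

lemma keyZ (n : ℕ) (hn : 1 ≤ n) (b : ℤ) :
    wtZ n (b + 2) - wtZ n (2 * b + 4) ≥ wtZ n b - wtZ n (2 * b) - 2 := by
  obtain ⟨r, hrlt, hre⟩ := exists_r n hn b
  have hM := Mpos n hn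
  have hMc := cast3 n
  have hr2 : ((r : ℤ)) % ((3:ℤ) ^ n - 1) = (r : ℤ) :=
    Int.emod_eq_of_lt (by positivity) (by omega)
  have hmodeq : b ≡ (r : ℤ) [ZMOD (3:ℤ) ^ n - 1] := by
    unfold Int.ModEq
    rw [hre, hr2]
  have e0 : wtZ n b = (w (r % (3 ^ n - 1)) : ℤ) := by
    rw [wtZ_congr hmodeq, wtZ_natmod n hn]
  have e1 : wtZ n (b + 2) = (w ((r + 2) % (3 ^ n - 1)) : ℤ) := by
    have hc : ((r + 2 : ℕ) : ℤ) = (r : ℤ) + 2 := by push_cast; ring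
    rw [wtZ_congr (show (b + 2) % ((3:ℤ) ^ n - 1) = ((r + 2 : ℕ) : ℤ) % ((3:ℤ) ^ n - 1) by
      rw [hc]; exact hmodeq.add_right 2), wtZ_natmod n hn]
  have e2 : wtZ n (2 * b) = (w ((2 * r) % (3 ^ n - 1)) : ℤ) := by
    have hc : ((2 * r : ℕ) : ℤ) = 2 * (r : ℤ) := by push_cast; ring
    rw [wtZ_congr (show (2 * b) % ((3:ℤ) ^ n - 1) = ((2 * r : ℕ) : ℤ) % ((3:ℤ) ^ n - 1) by
      rw [hc]; exact hmodeq.mul_left 2), wtZ_natmod n hn]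
  have e3 : wtZ n (2 * b + 4) = (w ((2 * r + 4) % (3 ^ n - 1)) : ℤ) := by
    have hc : ((2 * r + 4 : ℕ) : ℤ) = 2 * (r : ℤ) + 4 := by push_cast; ring
    rw [wtZ_congr (show (2 * b + 4) % ((3:ℤ) ^ n - 1) = ((2 * r + 4 : ℕ) : ℤ) % ((3:ℤ) ^ n - 1) by
      rw [hc]; exact (hmodeq.mul_left 2).add_right 4), wtZ_natmod n hn]
  have hkey := key n hn r hrlt
  rw [e0, e1, e2, e3, Nat.mod_eq_of_lt hrlt]
  omega

end WtAux

theorem stmt_14 (n : ℕ) (hn : 1 ≤ n) (i : ℕ) (a : ℤ) :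
    wtZ n (a + 2 * 3 ^ i) - wtZ n (2 * (a + 2 * 3 ^ i)) ≥
      wtZ n a - wtZ n (2 * a) - 2 := by
  have hdvd : ((3:ℤ) ^ n - 1) ∣ (3:ℤ) ^ (n * i) - 1 := by
    have h := sub_dvd_pow_sub_pow ((3:ℤ) ^ n) 1 i
    simpa [← pow_mul] using h
  have hcong : ((3:ℤ) ^ (n * i)) ≡ 1 [ZMOD (3:ℤ) ^ n - 1] := by
    apply Int.ModEq.symm
    rw [Int.modEq_iff_dvd]
    simpa using hdvd
  set c : ℤ := (3:ℤ) ^ ((n - 1) * i) with hc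
  have hci : (3:ℤ) ^ i * c = (3:ℤ) ^ (n * i) := by
    rw [hc, ← pow_add]
    congr 1
    conv_rhs => rw [show n = n - 1 + 1 by omega]
    ring
  have h1 : wtZ n (a + 2 * 3 ^ i) = wtZ n (c * a + 2) := by
    rw [← WtAux.wtZ_pow n hn i (c * a + 2)]
    apply WtAux.wtZ_congr
    have e : (3:ℤ) ^ i * (c * a + 2) = (3:ℤ) ^ (n * i) * a + 2 * 3 ^ i := by
      rw [← hci]; ring
    rw [e]
    have h := (hcong.mul_right a).add_right (2 * 3 ^ i)
    have e2 : a + 2 * 3 ^ i = 1 * a + 2 * 3 ^ i := by ring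
    rw [e2]
    exact h.symm
  have h2 : wtZ n (2 * (a + 2 * 3 ^ i)) = wtZ n (2 * (c * a) + 4) := by
    rw [← WtAux.wtZ_pow n hn i (2 * (c * a) + 4)]
    apply WtAux.wtZ_congr
    have e : (3:ℤ) ^ i * (2 * (c * a) + 4) = 2 * ((3:ℤ) ^ (n * i) * a) + 4 * 3 ^ i := by
      rw [← hci]; ring
    rw [e]
    have h := ((hcong.mul_right a).mul_left 2).add_right (4 * 3 ^ i)
    have e2 : 2 * (a + 2 * 3 ^ i) = 2 * (1 * a) + 4 * 3 ^ i := by ring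
    rw [e2]
    exact h.symm
  have h3 : wtZ n a = wtZ n (c * a) := by
    rw [hc]
    exact (WtAux.wtZ_pow n hn _ a).symm
  have h4 : wtZ n (2 * a) = wtZ n (2 * (c * a)) := by
    rw [show (2:ℤ) * (c * a) = c * (2 * a) by ring, hc]
    exact (WtAux.wtZ_pow n hn _ (2 * a)).symm
  rw [h1, h2, h3, h4]
  exact WtAux.keyZ n hn (c * a)
end

section
/- Let n = 2m+1 ≥ 3 and let j have a ternary representation (modulo 3^n - 1, up to cyclic shift) consisting only of 0's and isolated 1's (every 1 flanked by 0's on both sides cyclically), with at least two 1's. Then wt((3^{m+1}-1)j) - wt(2(3^{m+1}-1)j) ≥ 0, where wt is the ternary digit sum of the residue modulo 3^n - 1. -/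
/-- the `i`-th ternary digit of `j`. -/
def dig (j i : ℕ) : ℕ := j / 3 ^ i % 3

def s3' (x : ℕ) : ℕ := (Nat.digits 3 x).sum

lemma wt_eq (n a : ℕ) : wt n a = s3' (a % (3 ^ n - 1)) := rfl

lemma s3'_step (k r : ℕ) (hr : r < 3) : s3' (3 * k + r) = s3' k + r := by
  rcases Nat.eq_zero_or_pos (3 * k + r) with h0 | h0
  · have hk : k = 0 := by omega
    have hr0 : r = 0 := by omega
    subst hk; subst hr0; simp [s3']
  · unfold s3'
    rw [Nat.digits_def' (by norm_num : (1:ℕ) < 3) h0]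
    have h1 : (3 * k + r) % 3 = r := by omega
    have h2 : (3 * k + r) / 3 = k := by omega
    rw [List.sum_cons, h1, h2]; omega

lemma dig_succ (x i : ℕ) : dig x (i + 1) = dig (x / 3) i := by
  simp [dig, pow_succ, Nat.div_div_eq_div_mul, mul_comm]

lemma dig_shift (x : ℕ) (h : ∀ i, dig x i ≤ 1) : ∀ i, dig (x / 3) i ≤ 1 := by
  intro i; rw [← dig_succ]; exact h (i + 1)

lemma key : ∀ A B u : ℕ, (∀ i, dig A i ≤ 1) → (∀ i, dig B i ≤ 1) → u ≤ 1 → B + u ≤ A →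
    s3' (2 * (A - B - u) + u) + s3' B = s3' (A - B - u) + s3' A := by
  intro A
  induction A using Nat.strong_induction_on with
  | _ A ih =>
  intro B u hA hB hu hle
  rcases Nat.eq_zero_or_pos A with rfl | hApos
  · have hB0 : B = 0 := by omega
    have hu0 : u = 0 := by omega
    subst hB0; subst hu0; simp
  · have ha0 : A % 3 ≤ 1 := by simpa [dig] using hA 0
    have hb0 : B % 3 ≤ 1 := by simpa [dig] using hB 0
    have hA' := dig_shift A hA
    have hB' := dig_shift B hB
    have hdivlt : A / 3 < A := Nat.div_lt_self hApos (by norm_num)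
    have eA : s3' A = s3' (A / 3) + A % 3 := by
      have := s3'_step (A / 3) (A % 3) (by omega)
      rw [Nat.div_add_mod] at this; exact this
    have eB : s3' B = s3' (B / 3) + B % 3 := by
      have := s3'_step (B / 3) (B % 3) (by omega)
      rw [Nat.div_add_mod] at this; exact this
    by_cases hcase : B % 3 + u ≤ A % 3
    · -- no borrow: u' = 0
      have hrec := ih (A / 3) hdivlt (B / 3) 0 hA' hB' (by norm_num) (by omega)
      simp only [Nat.sub_zero, add_zero] at hrec
      have hT : 2 * (A - B - u) + u
          = 3 * (2 * (A / 3 - B / 3)) + (2 * (A % 3 - B % 3 - u) + u) := by omega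
      have hD : A - B - u = 3 * (A / 3 - B / 3) + (A % 3 - B % 3 - u) := by omega
      rw [hT, s3'_step _ _ (by omega), hD, s3'_step _ _ (by omega), eA, eB]
      omega
    · -- borrow: u' = 1
      have hBA' : B / 3 + 1 ≤ A / 3 := by omega
      have hrec := ih (A / 3) hdivlt (B / 3) 1 hA' hB' (by norm_num) hBA'
      have hT : 2 * (A - B - u) + u
          = 3 * (2 * (A / 3 - B / 3 - 1) + 1) + (2 * (A % 3 + 3 - B % 3 - u) + u - 3) := by omega
      have hD : A - B - u = 3 * (A / 3 - B / 3 - 1) + (A % 3 + 3 - B % 3 - u) := by omega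
      rw [hT, s3'_step _ _ (by omega), hD, s3'_step _ _ (by omega), eA, eB]
      omega

lemma s3'_split : ∀ k t z : ℕ, z < 3 ^ k → s3' (3 ^ k * t + z) = s3' t + s3' z := by
  intro k
  induction k with
  | zero =>
    intro t z hz
    have : z = 0 := by simpa using hz
    subst this; simp [s3']
  | succ k ih =>
    intro t z hz
    have h3 : (3:ℕ) ^ (k + 1) = 3 * 3 ^ k := by ring
    have hzd : z / 3 < 3 ^ k := by omega
    have key1 : 3 ^ (k + 1) * t + z = 3 * (3 ^ k * t + z / 3) + z % 3 := by
      rw [h3, mul_assoc]; omega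
    have ez : s3' z = s3' (z / 3) + z % 3 := by
      have := s3'_step (z / 3) (z % 3) (by omega)
      rw [Nat.div_add_mod] at this; exact this
    rw [key1, s3'_step _ _ (by omega), ih t (z / 3) hzd, ez]; ring

lemma s3'_comp : ∀ n x : ℕ, x ≤ 3 ^ n - 1 → s3' (3 ^ n - 1 - x) + s3' x = 2 * n := by
  intro n
  induction n with
  | zero => intro x hx; have : x = 0 := by simpa using hx
            subst this; simp [s3']
  | succ n ih =>
    intro x hx
    have h3 : (3:ℕ) ^ (n + 1) = 3 * 3 ^ n := by ring
    have h1 : 1 ≤ (3:ℕ) ^ n := Nat.one_le_pow _ _ (by norm_num)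
    have hx' : x / 3 ≤ 3 ^ n - 1 := by omega
    have e1 : 3 ^ (n + 1) - 1 - x = 3 * (3 ^ n - 1 - x / 3) + (2 - x % 3) := by omega
    have ex : s3' x = s3' (x / 3) + x % 3 := by
      have := s3'_step (x / 3) (x % 3) (by omega)
      rw [Nat.div_add_mod] at this; exact this
    have := ih (x / 3) hx'
    rw [e1, s3'_step _ _ (by omega), ex]
    omega

lemma twice : ∀ k x : ℕ, (∀ i, dig x i ≤ 1) → x < 3 ^ k → 2 * x + 1 ≤ 3 ^ k := by
  intro k
  induction k with
  | zero => intro x _ hx; omega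
  | succ k ih =>
    intro x hd hx
    have h3 : (3:ℕ) ^ (k + 1) = 3 * 3 ^ k := by ring
    have hx0 : x % 3 ≤ 1 := by simpa [dig] using hd 0
    have := ih (x / 3) (dig_shift x hd) (by omega)
    omega

lemma dig_mod_le (x k : ℕ) (h : ∀ i, dig x i ≤ 1) : ∀ i, dig (x % 3 ^ k) i ≤ 1 := by
  intro i
  by_cases hik : i < k
  · have hsplit : (3:ℕ) ^ k = 3 ^ i * 3 ^ (k - i) := by
      rw [← pow_add]; congr 1; omega
    have h1 : x % 3 ^ k / 3 ^ i = x / 3 ^ i % 3 ^ (k - i) := by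
      rw [hsplit]; exact Nat.mod_mul_right_div_self x (3 ^ i) (3 ^ (k - i))
    have h2 : (3:ℕ) ∣ 3 ^ (k - i) := dvd_pow_self 3 (by omega)
    calc dig (x % 3 ^ k) i = x / 3 ^ i % 3 ^ (k - i) % 3 := by rw [dig, h1]
      _ = x / 3 ^ i % 3 := Nat.mod_mod_of_dvd _ h2
      _ ≤ 1 := h i
  · have : x % 3 ^ k < 3 ^ i :=
      lt_of_lt_of_le (Nat.mod_lt _ (by positivity)) (Nat.pow_le_pow_right (by norm_num) (by omega))
    simp [dig, Nat.div_eq_of_lt this]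

lemma rot1 (n x : ℕ) (hn : 1 ≤ n) (hx : x < 3 ^ n - 1) (hd : ∀ i, dig x i ≤ 1) :
    3 * x % (3 ^ n - 1) < 3 ^ n - 1 ∧ (∀ i, dig (3 * x % (3 ^ n - 1)) i ≤ 1) ∧
      s3' (3 * x % (3 ^ n - 1)) = s3' x := by
  have hpow : (3:ℕ) ^ n = 3 * 3 ^ (n - 1) := by
    conv_lhs => rw [show n = (n - 1) + 1 by omega]
    ring
  have h1 : 1 ≤ (3:ℕ) ^ (n - 1) := Nat.one_le_pow _ _ (by norm_num)
  have ht0 : x / 3 ^ (n - 1) ≤ 1 := by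
    have h3 : x / 3 ^ (n - 1) < 3 := by
      rw [Nat.div_lt_iff_lt_mul (by positivity)]; omega
    have := hd (n - 1)
    simp only [dig] at this
    omega
  obtain ⟨t, z, hzx, ht, hzlt, hzdig⟩ :
      ∃ t z, 3 ^ (n - 1) * t + z = x ∧ t ≤ 1 ∧ z < 3 ^ (n - 1) ∧ ∀ i, dig z i ≤ 1 :=
    ⟨x / 3 ^ (n - 1), x % 3 ^ (n - 1), Nat.div_add_mod x _, ht0,
      Nat.mod_lt _ (by positivity), dig_mod_le x (n - 1) hd⟩
  subst hzx
  have hsum_lt : 3 * z + t < 3 ^ n - 1 := by omega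
  have hmod : 3 * (3 ^ (n - 1) * t + z) % (3 ^ n - 1) = 3 * z + t := by
    have hval : 3 * (3 ^ (n - 1) * t + z) = 3 * z + t + t * (3 ^ n - 1) := by
      interval_cases t <;> omega
    rw [hval, Nat.add_mul_mod_self_right, Nat.mod_eq_of_lt hsum_lt]
  rw [hmod]
  refine ⟨hsum_lt, ?_, ?_⟩
  · intro i
    cases i with
    | zero => simp only [dig, pow_zero, Nat.div_one]; omega
    | succ i =>
      rw [dig_succ]
      have : (3 * z + t) / 3 = z := by omega
      rw [this]
      exact hzdig i
  · have e1 : s3' (3 * z + t) = s3' z + t := s3'_step z t (by omega)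
    have e2 : s3' (3 ^ (n - 1) * t + z) = s3' t + s3' z := s3'_split (n - 1) t z hzlt
    have e3 : s3' t = t := by
      have := s3'_step 0 t (by omega)
      simpa [s3'] using this
    omega

lemma rotk (n x k : ℕ) (hn : 1 ≤ n) (hx : x < 3 ^ n - 1) (hd : ∀ i, dig x i ≤ 1) :
    3 ^ k * x % (3 ^ n - 1) < 3 ^ n - 1 ∧ (∀ i, dig (3 ^ k * x % (3 ^ n - 1)) i ≤ 1) ∧
      s3' (3 ^ k * x % (3 ^ n - 1)) = s3' x := by
  induction k with
  | zero =>
    rw [pow_zero, one_mul, Nat.mod_eq_of_lt hx]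
    exact ⟨hx, hd, rfl⟩
  | succ k ih =>
    obtain ⟨h1, h2, h3⟩ := ih
    have hmm : 3 ^ (k + 1) * x % (3 ^ n - 1)
        = 3 * (3 ^ k * x % (3 ^ n - 1)) % (3 ^ n - 1) := by
      conv_lhs => rw [pow_succ, mul_comm (3 ^ k) 3, mul_assoc]
      conv_rhs => rw [Nat.mul_mod, Nat.mod_mod_of_dvd _ dvd_rfl]
      rw [Nat.mul_mod]
    obtain ⟨g1, g2, g3⟩ := rot1 n _ hn h1 h2
    rw [hmm]
    exact ⟨g1, g2, g3.trans h3⟩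

theorem stmt_18 (m n : ℕ) (hm : 1 ≤ m) (hn : n = 2 * m + 1) (j : ℕ)
    (hj : 0 < j) (hj' : j < 3 ^ n - 1)
    (h01 : ∀ i < n, dig j i = 0 ∨ dig j i = 1)
    (hiso : ∀ i < n, dig j i = 1 →
      dig j ((i + 1) % n) = 0 ∧ dig j ((i + (n - 1)) % n) = 0)
    (htwo : 2 ≤ ((Finset.range n).filter fun i => dig j i = 1).card) :
    0 ≤ (wt n ((3 ^ (m + 1) - 1) * j) : ℤ) - wt n (2 * (3 ^ (m + 1) - 1) * j) := by
  have hn3 : 3 ≤ n := by omega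
  obtain ⟨K, hK⟩ : (27:ℕ) ∣ 3 ^ n := by
    have : (27:ℕ) = 3 ^ 3 := by norm_num
    rw [this]; exact pow_dvd_pow 3 hn3
  have hpown : 1 ≤ (3:ℕ) ^ n := Nat.one_le_pow _ _ (by norm_num)
  have hdigj : ∀ i, dig j i ≤ 1 := by
    intro i
    by_cases hi : i < n
    · rcases h01 i hi with h | h <;> omega
    · have hj3 : j < 3 ^ n := by omega
      have : j < 3 ^ i :=
        lt_of_lt_of_le hj3 (Nat.pow_le_pow_right (by norm_num) (by omega))
      simp [dig, Nat.div_eq_of_lt this]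
  obtain ⟨A, hAdef, hAlt, hAdig, hAs⟩ :
      ∃ A, A = 3 ^ (m + 1) * j % (3 ^ n - 1) ∧ A < 3 ^ n - 1 ∧
        (∀ i, dig A i ≤ 1) ∧ s3' A = s3' j := by
    obtain ⟨h1, h2, h3⟩ := rotk n j (m + 1) (by omega) hj' hdigj
    exact ⟨_, rfl, h1, h2, h3⟩
  have hmodA : 3 ^ (m + 1) * j ≡ A [MOD 3 ^ n - 1] := by
    rw [hAdef]; exact (Nat.mod_modEq _ _).symm
  have hC1 : 1 ≤ (3:ℕ) ^ (m + 1) := Nat.one_le_pow _ _ (by norm_num)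
  have hCj : j ≤ 3 ^ (m + 1) * j := Nat.le_mul_of_pos_left j (by positivity)
  have hcj_eq : (3 ^ (m + 1) - 1) * j + j = 3 ^ (m + 1) * j := by
    rw [Nat.sub_mul, one_mul]; omega
  have h2j : 2 * j + 1 ≤ 3 ^ n := twice n j hdigj (by omega)
  have h2A : 2 * A + 1 ≤ 3 ^ n := twice n A hAdig (by omega)
  -- A ≠ j
  have hAj : A ≠ j := by
    intro hEq
    have h1' : 3 ^ (m + 1) * j ≡ j [MOD 3 ^ n - 1] := by
      have h := hmodA; rw [hEq] at h; exact h
    have h2 : 3 ^ (m + 1) * (3 ^ (m + 1) * j) ≡ 3 ^ (m + 1) * j [MOD 3 ^ n - 1] :=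
      h1'.mul_left _
    have h3 : 3 ^ (m + 1) * (3 ^ (m + 1) * j) = 3 * 3 ^ n * j := by
      rw [← mul_assoc, ← pow_add, show m + 1 + (m + 1) = 1 + n by omega, pow_add, pow_one]
    have hone : (3:ℕ) ^ n ≡ 1 [MOD 3 ^ n - 1] :=
      ((Nat.modEq_iff_dvd' hpown).mpr dvd_rfl).symm
    have h4 : 3 * 3 ^ n * j ≡ 3 * 1 * j [MOD 3 ^ n - 1] :=
      ((hone.mul_left 3).mul_right j)
    have h5 : 3 * 3 ^ n * j ≡ j [MOD 3 ^ n - 1] := (h3 ▸ h2).trans h1'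
    have h6 : 3 * j ≡ j [MOD 3 ^ n - 1] := by
      have := h4.symm.trans h5
      simpa using this
    have hdvd : 3 ^ n - 1 ∣ 2 * j := by
      have := (Nat.modEq_iff_dvd' (by omega : j ≤ 3 * j)).mp h6.symm
      rwa [show 3 * j - j = 2 * j by omega] at this
    have h2jN : 2 * j = 3 ^ n - 1 := by
      obtain ⟨c, hc⟩ := hdvd
      have hlt2 : (3 ^ n - 1) * c < (3 ^ n - 1) * 2 := by omega
      have hclt : c < 2 := Nat.lt_of_mul_lt_mul_left hlt2
      interval_cases c <;> omega
    have hj0 : dig j 0 = 1 := by simp only [dig, pow_zero, Nat.div_one]; omega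
    obtain ⟨hx1, -⟩ := hiso 0 (by omega) hj0
    rw [show (0 + 1) % n = 1 by rw [Nat.mod_eq_of_lt (by omega)]] at hx1
    have : dig j 1 = 1 := by simp only [dig, pow_one]; omega
    omega
  rw [wt_eq, wt_eq, show 2 * (3 ^ (m + 1) - 1) * j = 2 * ((3 ^ (m + 1) - 1) * j) by ring]
  rcases Nat.lt_or_ge j A with hlt | hge
  · -- j < A : cj ≡ A - j
    have hD : ((3 ^ (m + 1) - 1) * j) % (3 ^ n - 1) = A - j := by
      have h1 : (3 ^ (m + 1) - 1) * j + j ≡ (A - j) + j [MOD 3 ^ n - 1] := by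
        rw [hcj_eq, show (A - j) + j = A by omega]; exact hmodA
      have h2 : ((3 ^ (m + 1) - 1) * j) % (3 ^ n - 1) = (A - j) % (3 ^ n - 1) :=
        Nat.ModEq.add_right_cancel' j h1
      rw [Nat.mod_eq_of_lt (show A - j < 3 ^ n - 1 by omega)] at h2
      exact h2
    have hD2 : (2 * ((3 ^ (m + 1) - 1) * j)) % (3 ^ n - 1) = 2 * (A - j) := by
      have h1 : 2 * ((3 ^ (m + 1) - 1) * j) + 2 * j ≡ 2 * (A - j) + 2 * j [MOD 3 ^ n - 1] := by
        rw [show 2 * ((3 ^ (m + 1) - 1) * j) + 2 * j = 2 * ((3 ^ (m + 1) - 1) * j + j) by ring,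
          hcj_eq, show 2 * (A - j) + 2 * j = 2 * A by omega]
        exact hmodA.mul_left 2
      have h2 : (2 * ((3 ^ (m + 1) - 1) * j)) % (3 ^ n - 1) = (2 * (A - j)) % (3 ^ n - 1) :=
        Nat.ModEq.add_right_cancel' (2 * j) h1
      rw [Nat.mod_eq_of_lt (show 2 * (A - j) < 3 ^ n - 1 by omega)] at h2
      exact h2
    rw [hD, hD2]
    have hkey := key A j 0 hAdig hdigj (by norm_num) (by omega)
    simp only [Nat.sub_zero, add_zero] at hkey
    omega
  · -- A < j : cj ≡ N - (j - A)
    have hgt : A < j := by omega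
    have hD : ((3 ^ (m + 1) - 1) * j) % (3 ^ n - 1) = (3 ^ n - 1) - (j - A) := by
      have hNA : ((3 ^ n - 1) + A) % (3 ^ n - 1) = A % (3 ^ n - 1) := Nat.add_mod_left _ _
      have h1 : (3 ^ (m + 1) - 1) * j + j ≡ ((3 ^ n - 1) - (j - A)) + j [MOD 3 ^ n - 1] := by
        rw [hcj_eq, show ((3 ^ n - 1) - (j - A)) + j = (3 ^ n - 1) + A by omega]
        exact hmodA.trans hNA.symm
      have h2 : ((3 ^ (m + 1) - 1) * j) % (3 ^ n - 1)
          = ((3 ^ n - 1) - (j - A)) % (3 ^ n - 1) := Nat.ModEq.add_right_cancel' j h1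
      rw [Nat.mod_eq_of_lt (show (3 ^ n - 1) - (j - A) < 3 ^ n - 1 by omega)] at h2
      exact h2
    have hD2 : (2 * ((3 ^ (m + 1) - 1) * j)) % (3 ^ n - 1) = (3 ^ n - 1) - 2 * (j - A) := by
      have hNA : ((3 ^ n - 1) + 2 * A) % (3 ^ n - 1) = (2 * A) % (3 ^ n - 1) :=
        Nat.add_mod_left _ _
      have h1 : 2 * ((3 ^ (m + 1) - 1) * j) + 2 * j
          ≡ ((3 ^ n - 1) - 2 * (j - A)) + 2 * j [MOD 3 ^ n - 1] := by
        rw [show 2 * ((3 ^ (m + 1) - 1) * j) + 2 * j = 2 * ((3 ^ (m + 1) - 1) * j + j) by ring,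
          hcj_eq,
          show ((3 ^ n - 1) - 2 * (j - A)) + 2 * j = (3 ^ n - 1) + 2 * A by omega]
        exact (hmodA.mul_left 2).trans hNA.symm
      have h2 : (2 * ((3 ^ (m + 1) - 1) * j)) % (3 ^ n - 1)
          = ((3 ^ n - 1) - 2 * (j - A)) % (3 ^ n - 1) :=
        Nat.ModEq.add_right_cancel' (2 * j) h1
      rw [Nat.mod_eq_of_lt (show (3 ^ n - 1) - 2 * (j - A) < 3 ^ n - 1 by omega)] at h2
      exact h2
    rw [hD, hD2]
    have hcomp1 := s3'_comp n (j - A) (by omega)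
    have hcomp2 := s3'_comp n (2 * (j - A)) (by omega)
    have hkey := key j A 0 hdigj hAdig (by norm_num) (by omega)
    simp only [Nat.sub_zero, add_zero] at hkey
    omega
end

section
/- Let n = 2m+1 ≥ 3, v = 2(3^{m+1}-1), t = (3^n+1)/4, and consider j ∈ {3^i : 0 ≤ i ≤ n-1} ∪ {(2·3^m+1)3^i mod (3^n-1) : 0 ≤ i ≤ n-1}. Then wt(jvt) + wt(-jv) + wt(j) = 2n + 1, where wt is the ternary digit sum of the residue modulo 3^n - 1. -/
private def S (x : ℕ) : ℕ := (Nat.digits 3 x).sum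

private lemma S_cons (d x : ℕ) (hd : d < 3) : S (d + 3 * x) = d + S x := by
  rcases Nat.eq_zero_or_pos (d + 3 * x) with h | h
  · have hd0 : d = 0 := by omega
    have hx0 : x = 0 := by omega
    simp [S, hd0, hx0]
  · unfold S
    rw [Nat.digits_def' (by norm_num : 1 < 3) h]
    have h1 : (d + 3 * x) % 3 = d := by omega
    have h2 : (d + 3 * x) / 3 = x := by omega
    rw [h1, h2, List.sum_cons]

private lemma S_lt3 (q : ℕ) (h : q < 3) : S q = q := by
  interval_cases q <;> simp [S]

private lemma S_split (k : ℕ) : ∀ r s : ℕ, r < 3 ^ k → S (r + 3 ^ k * s) = S r + S s := by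
  induction k with
  | zero =>
    intro r s hr
    interval_cases r
    simp [S]
  | succ k ih =>
    intro r s hr
    have h3 : (3:ℕ) ^ (k+1) = 3 * 3 ^ k := by ring
    have h3s : 3 ^ (k+1) * s = 3 * (3 ^ k * s) := by ring
    have e : r + 3 ^ (k+1) * s = r % 3 + 3 * (r / 3 + 3 ^ k * s) := by omega
    have hdiv : r / 3 < 3 ^ k := by omega
    rw [e, S_cons _ _ (Nat.mod_lt _ (by norm_num)), ih (r/3) s hdiv]
    have h2 : S r = r % 3 + S (r / 3) := by
      conv_lhs => rw [show r = r % 3 + 3 * (r / 3) by omega]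
      exact S_cons _ _ (by omega)
    omega

private lemma S_all2 (k : ℕ) : S (3 ^ k - 1) = 2 * k := by
  induction k with
  | zero => simp [S]
  | succ k ih =>
    have h3 : (3:ℕ) ^ (k+1) = 3 * 3 ^ k := by ring
    have h1 : (1:ℕ) ≤ 3 ^ k := Nat.one_le_pow _ _ (by norm_num)
    rw [show 3 ^ (k+1) - 1 = 2 + 3 * (3 ^ k - 1) by omega, S_cons _ _ (by norm_num), ih]
    omega

private lemma rot1_s19 (n a : ℕ) (hn : 1 ≤ n) (ha : a < 3 ^ n - 1) :
    S ((3 * a) % (3 ^ n - 1)) = S a := by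
  obtain ⟨n', rfl⟩ : ∃ n', n = n' + 1 := ⟨n - 1, by omega⟩
  have hP1 : 1 ≤ 3 ^ n' := Nat.one_le_pow _ _ (by norm_num)
  have h3 : (3:ℕ) ^ (n'+1) = 3 * 3 ^ n' := by ring
  obtain ⟨q, r, hqr, hrP, hq3⟩ :
      ∃ q r, a = 3 ^ n' * q + r ∧ r < 3 ^ n' ∧ q < 3 := by
    refine ⟨a / 3 ^ n', a % 3 ^ n', (Nat.div_add_mod a (3 ^ n')).symm,
      Nat.mod_lt _ (by omega), ?_⟩
    rw [Nat.div_lt_iff_lt_mul (by omega)]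
    omega
  subst hqr
  have hlt : q + 3 * r < 3 ^ (n'+1) - 1 := by interval_cases q <;> omega
  have e3 : q * (3 * 3 ^ n') = q * (3 ^ (n'+1) - 1) + q := by
    rw [show 3 * 3 ^ n' = (3 ^ (n'+1) - 1) + 1 by omega, Nat.mul_add, Nat.mul_one]
  have e2 : 3 * (3 ^ n' * q + r) = 3 * r + q * (3 * 3 ^ n') := by ring
  have e : 3 * (3 ^ n' * q + r) = (q + 3 * r) + q * (3 ^ (n'+1) - 1) := by omega
  rw [e, Nat.add_mul_mod_self_right, Nat.mod_eq_of_lt hlt, S_cons _ _ hq3]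
  rw [show 3 ^ n' * q + r = r + 3 ^ n' * q by ring, S_split n' r q hrP, S_lt3 q hq3]
  omega

private lemma rot (n : ℕ) (hn : 1 ≤ n) (i : ℕ) :
    ∀ a, a < 3 ^ n - 1 → S ((3 ^ i * a) % (3 ^ n - 1)) = S a := by
  induction i with
  | zero =>
    intro a ha
    rw [pow_zero, one_mul, Nat.mod_eq_of_lt ha]
  | succ i ih =>
    intro a ha
    have hN : 1 ≤ 3 ^ n - 1 := by
      have : (3:ℕ) ^ 1 ≤ 3 ^ n := Nat.pow_le_pow_right (by norm_num) hn
      omega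
    have h1 : 3 ^ (i+1) * a = 3 * (3 ^ i * a) := by ring
    have h2 : (3 * (3 ^ i * a)) % (3 ^ n - 1)
        = (3 * ((3 ^ i * a) % (3 ^ n - 1))) % (3 ^ n - 1) :=
      Nat.ModEq.mul_left 3 (Nat.mod_modEq (3 ^ i * a) (3 ^ n - 1)).symm
    rw [h1, h2, rot1_s19 n _ hn (Nat.mod_lt _ (by omega)), ih a ha]

private lemma wtZ_congr (n : ℕ) (hn : 1 ≤ n) (a : ℤ) (i x : ℕ) (hx : x < 3 ^ n - 1)
    (h : a ≡ (3:ℤ) ^ i * (x:ℤ) [ZMOD ((3:ℤ) ^ n - 1)]) :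
    wtZ n a = (S x : ℤ) := by
  have h1 : (1:ℕ) ≤ 3 ^ n := Nat.one_le_pow _ _ (by norm_num)
  have h' : a % ((3:ℤ) ^ n - 1) = ((3:ℤ) ^ i * (x:ℤ)) % ((3:ℤ) ^ n - 1) := h
  have hN : ((3:ℤ) ^ n - 1) = ((3 ^ n - 1 : ℕ) : ℤ) := by
    rw [Nat.cast_sub h1]; push_cast; ring
  have hx2 : ((3:ℤ) ^ i * (x:ℤ)) = ((3 ^ i * x : ℕ) : ℤ) := by push_cast; ring
  have hmod : ((3 ^ i * x : ℕ) : ℤ) % ((3 ^ n - 1 : ℕ) : ℤ)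
      = (((3 ^ i * x) % (3 ^ n - 1) : ℕ) : ℤ) := by
    push_cast; ring
  unfold wtZ
  rw [h', hN, hx2, hmod, Int.toNat_natCast]
  have hr := rot n hn i x hx
  unfold S at hr
  rw [hr]
  rfl

private lemma S_B (k : ℕ) : S (3 ^ (2*k+3) + 1 - 2 * 3 ^ (k+2)) = 2 * k + 2 := by
  have h1 : (1:ℕ) ≤ 3 ^ k := Nat.one_le_pow _ _ (by norm_num)
  have hXX : 3 ^ k ≤ 3 ^ k * 3 ^ k := Nat.le_mul_of_pos_left _ (by omega)
  have h2 : (3:ℕ) ^ (2*k+3) = 27 * (3 ^ k * 3 ^ k) := by ring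
  have h3 : (3:ℕ) ^ (k+2) = 9 * 3 ^ k := by ring
  have h4 : (3:ℕ) ^ (k+3) = 27 * 3 ^ k := by ring
  have hle : 2 * 3 ^ (k+2) ≤ 3 ^ (2*k+3) + 1 := by omega
  have e : 3 ^ (2*k+3) + 1 - 2 * 3 ^ (k+2) = (3 ^ (k+2) + 1) + 3 ^ (k+3) * (3 ^ k - 1) := by
    zify [hle, h1]
    ring
  rw [e, S_split (k+3) _ _ (by omega)]
  have e2 : (3:ℕ) ^ (k+2) + 1 = 1 + 3 ^ (k+2) * 1 := by ring
  rw [e2, S_split (k+2) 1 1 (by omega), S_lt3 1 (by norm_num), S_all2 k]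
  omega

private lemma S_C (k : ℕ) : S (3 ^ (2*k+3) - 3 - 2 * 3 ^ (k+1)) = 4 * k + 2 := by
  have h1 : (1:ℕ) ≤ 3 ^ k := Nat.one_le_pow _ _ (by norm_num)
  have hXX : 3 ^ k ≤ 3 ^ k * 3 ^ k := Nat.le_mul_of_pos_left _ (by omega)
  have h2 : (3:ℕ) ^ (2*k+3) = 27 * (3 ^ k * 3 ^ k) := by ring
  have h3 : (3:ℕ) ^ (k+2) = 9 * 3 ^ k := by ring
  have h4 : (3:ℕ) ^ (k+1) = 3 * 3 ^ k := by ring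
  have hle1 : (3:ℕ) ≤ 3 ^ (2*k+3) := by omega
  have hle2 : 2 * 3 ^ (k+1) ≤ 3 ^ (2*k+3) - 3 := by omega
  have e : 3 ^ (2*k+3) - 3 - 2 * 3 ^ (k+1)
      = (3 ^ (k+1) - 3) + 3 ^ (k+2) * (3 ^ (k+1) - 1) := by
    zify [hle1, hle2, show (3:ℕ) ≤ 3 ^ (k+1) by omega, show (1:ℕ) ≤ 3 ^ (k+1) by omega]
    ring
  rw [e, S_split (k+2) _ _ (by omega)]
  rw [show 3 ^ (k+1) - 3 = 0 + 3 * (3 ^ k - 1) by omega,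
      S_cons 0 _ (by norm_num), S_all2 k, S_all2 (k+1)]
  omega

theorem stmt_19 (m n : ℕ) (hm : 1 ≤ m) (hn : n = 2 * m + 1)
    (v t : ℤ) (hv : v = 2 * (3 ^ (m + 1) - 1)) (ht : t = ((3 : ℤ) ^ n + 1) / 4)
    (j : ℤ)
    (hj : ∃ i ≤ n - 1, j = 3 ^ i ∨ j = (2 * 3 ^ m + 1) * 3 ^ i % ((3 : ℤ) ^ n - 1)) :
    wtZ n (j * v * t) + wtZ n (-(j * v)) + wtZ n j = 2 * n + 1 := by
  subst hn
  obtain ⟨k, rfl⟩ : ∃ k, m = k + 1 := ⟨m - 1, by omega⟩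
  obtain ⟨i, hi, hcase⟩ := hj
  have hn1 : (1:ℕ) ≤ 2 * (k + 1) + 1 := by omega
  set N : ℤ := (3:ℤ) ^ (2 * (k + 1) + 1) - 1 with hNdef
  -- 4t = 3^n + 1
  have h9e : (9:ℤ) ^ k = ((3:ℤ) ^ k) ^ 2 := by
    rw [show (9:ℤ) = 3 ^ 2 by norm_num, ← pow_mul]; ring
  have h4 : (4:ℤ) ∣ 3 ^ (2 * (k + 1) + 1) + 1 := by
    have h9 : (9:ℤ) ^ k ≡ 1 ^ k [ZMOD 4] := Int.ModEq.pow k (by decide)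
    obtain ⟨c, hc⟩ := h9.dvd
    exact ⟨7 - 27 * c, by linear_combination (-27 : ℤ) * hc + (-27 : ℤ) * h9e⟩
  have h4t : 4 * t = (3:ℤ) ^ (2 * (k + 1) + 1) + 1 := by
    rw [ht]; exact Int.mul_ediv_cancel' h4
  obtain ⟨w, hw⟩ : ∃ w : ℤ, (3:ℤ) ^ k = 2 * w + 1 := by
    obtain ⟨w, hw⟩ := Odd.pow (n := k) (⟨1, by ring⟩ : Odd (3:ℤ))
    exact ⟨w, by linarith⟩
  have hA2 : (3:ℤ) ^ (k+2) - 1 = 2 * (9 * w + 4) := by linear_combination (9:ℤ) * hw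
  -- key integer congruences
  have key1 : v * t - ((3:ℤ) ^ (k+2) - 1) = N * (9 * w + 4) := by
    rw [hv, hNdef]
    linear_combination (2 * t - 1) * hA2 + (9 * w + 4) * h4t
  have key2 : -v - ((3:ℤ) ^ (2*k+3) + 1 - 2 * 3 ^ (k+2)) = N * (-1) := by
    rw [hv, hNdef]; ring
  have key3 : (2 * 3 ^ (k+1) + 1) * v - (2 * (3:ℤ) ^ (k+1) + 2) = N * 4 := by
    rw [hv, hNdef]; ring
  have key4 : (2 * 3 ^ (k+1) + 1) * v * t - ((3:ℤ) ^ (k+1) + 1)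
      = N * (27 * ((3:ℤ) ^ k) ^ 2 + 3 * w + 3) := by
    rw [hv, hNdef]
    linear_combination (27 * ((3:ℤ) ^ k) ^ 2 + 3 * w + 1) * h4t + (6 * t - 3) * hw
  -- nat facts for bounds and casts
  have p1 : (1:ℕ) ≤ 3 ^ k := Nat.one_le_pow _ _ (by norm_num)
  have hXX : 3 ^ k ≤ 3 ^ k * 3 ^ k := Nat.le_mul_of_pos_left _ (by omega)
  have q2 : (3:ℕ) ^ (2 * (k+1) + 1) = 27 * (3 ^ k * 3 ^ k) := by ring
  have q3 : (3:ℕ) ^ (k+2) = 9 * 3 ^ k := by ring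
  have q4 : (3:ℕ) ^ (k+1) = 3 * 3 ^ k := by ring
  have q5 : (3:ℕ) ^ (2*k+3) = 27 * (3 ^ k * 3 ^ k) := by ring
  -- casts
  have castA : (((3 ^ (k+2) - 1 : ℕ)) : ℤ) = (3:ℤ) ^ (k+2) - 1 := by
    rw [Nat.cast_sub (by omega)]; push_cast; ring
  have castB : (((3 ^ (2*k+3) + 1 - 2 * 3 ^ (k+2) : ℕ)) : ℤ)
      = (3:ℤ) ^ (2*k+3) + 1 - 2 * 3 ^ (k+2) := by
    rw [Nat.cast_sub (by omega)]; push_cast; ring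
  have castC : (((3 ^ (2*k+3) - 3 - 2 * 3 ^ (k+1) : ℕ)) : ℤ)
      = (3:ℤ) ^ (2*k+3) - 3 - 2 * 3 ^ (k+1) := by
    rw [Nat.cast_sub (by omega), Nat.cast_sub (by omega)]; push_cast; ring
  have castD : (((3 ^ (k+1) + 1 : ℕ)) : ℤ) = (3:ℤ) ^ (k+1) + 1 := by push_cast; ring
  have castJ : (((2 * 3 ^ (k+1) + 1 : ℕ)) : ℤ) = 2 * (3:ℤ) ^ (k+1) + 1 := by push_cast; ring
  rcases hcase with hcase | hcase
  · -- j = 3 ^ i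
    have m1 : wtZ (2 * (k+1) + 1) (j * v * t) = (S (3 ^ (k+2) - 1) : ℤ) := by
      refine wtZ_congr _ hn1 _ i _ (by omega) ?_
      rw [castA, hcase]
      calc (3:ℤ) ^ i * v * t = v * t * 3 ^ i := by ring
        _ ≡ ((3:ℤ) ^ (k+2) - 1) * 3 ^ i [ZMOD N] :=
            (Int.modEq_iff_dvd.mpr ⟨9 * w + 4, key1⟩).symm.mul_right _
        _ = (3:ℤ) ^ i * ((3:ℤ) ^ (k+2) - 1) := by ring
    have m2 : wtZ (2 * (k+1) + 1) (-(j * v))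
        = (S (3 ^ (2*k+3) + 1 - 2 * 3 ^ (k+2)) : ℤ) := by
      refine wtZ_congr _ hn1 _ i _ (by omega) ?_
      rw [castB, hcase]
      calc -((3:ℤ) ^ i * v) = (-v) * 3 ^ i := by ring
        _ ≡ ((3:ℤ) ^ (2*k+3) + 1 - 2 * 3 ^ (k+2)) * 3 ^ i [ZMOD N] :=
            (Int.modEq_iff_dvd.mpr ⟨-1, key2⟩).symm.mul_right _
        _ = (3:ℤ) ^ i * ((3:ℤ) ^ (2*k+3) + 1 - 2 * 3 ^ (k+2)) := by ring
    have m3 : wtZ (2 * (k+1) + 1) j = (S 1 : ℤ) := by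
      refine wtZ_congr _ hn1 _ i _ (by omega) ?_
      rw [hcase]
      exact Int.ModEq.refl _ |>.trans (by push_cast; rw [mul_one])
    rw [m1, m2, m3, S_all2 (k+2), S_B k, S_lt3 1 (by norm_num)]
    push_cast
    ring
  · -- j = (2 * 3 ^ (k+1) + 1) * 3 ^ i % N
    have hj0 : j ≡ (2 * 3 ^ (k+1) + 1) * 3 ^ i [ZMOD N] := by
      rw [hcase]
      exact Int.emod_emod_of_dvd _ dvd_rfl
    have m1 : wtZ (2 * (k+1) + 1) (j * v * t) = (S (3 ^ (k+1) + 1) : ℤ) := by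
      refine wtZ_congr _ hn1 _ i _ (by omega) ?_
      rw [castD]
      calc j * v * t = j * (v * t) := by ring
        _ ≡ ((2 * 3 ^ (k+1) + 1) * 3 ^ i) * (v * t) [ZMOD N] := hj0.mul_right _
        _ = ((2 * 3 ^ (k+1) + 1) * v * t) * 3 ^ i := by ring
        _ ≡ ((3:ℤ) ^ (k+1) + 1) * 3 ^ i [ZMOD N] :=
            (Int.modEq_iff_dvd.mpr ⟨_, key4⟩).symm.mul_right _
        _ = (3:ℤ) ^ i * ((3:ℤ) ^ (k+1) + 1) := by ring
    have m2 : wtZ (2 * (k+1) + 1) (-(j * v))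
        = (S (3 ^ (2*k+3) - 3 - 2 * 3 ^ (k+1)) : ℤ) := by
      refine wtZ_congr _ hn1 _ i _ (by omega) ?_
      rw [castC]
      have key3' : -((2 * 3 ^ (k+1) + 1) * v) - ((3:ℤ) ^ (2*k+3) - 3 - 2 * 3 ^ (k+1))
          = N * (-5) := by
        rw [hv, hNdef]; ring
      calc -(j * v) = (-v) * j := by ring
        _ ≡ (-v) * ((2 * 3 ^ (k+1) + 1) * 3 ^ i) [ZMOD N] := hj0.mul_left _
        _ = (-((2 * 3 ^ (k+1) + 1) * v)) * 3 ^ i := by ring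
        _ ≡ ((3:ℤ) ^ (2*k+3) - 3 - 2 * 3 ^ (k+1)) * 3 ^ i [ZMOD N] :=
            (Int.modEq_iff_dvd.mpr ⟨-5, key3'⟩).symm.mul_right _
        _ = (3:ℤ) ^ i * ((3:ℤ) ^ (2*k+3) - 3 - 2 * 3 ^ (k+1)) := by ring
    have m3 : wtZ (2 * (k+1) + 1) j = (S (2 * 3 ^ (k+1) + 1) : ℤ) := by
      refine wtZ_congr _ hn1 _ i _ (by omega) ?_
      rw [castJ]
      calc j ≡ (2 * 3 ^ (k+1) + 1) * 3 ^ i [ZMOD N] := hj0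
        _ = (3:ℤ) ^ i * (2 * (3:ℤ) ^ (k+1) + 1) := by ring
    have sJ : S (2 * 3 ^ (k+1) + 1) = 3 := by
      rw [show 2 * 3 ^ (k+1) + 1 = 1 + 3 ^ (k+1) * 2 by ring,
          S_split (k+1) 1 2 (by omega), S_lt3 1 (by norm_num), S_lt3 2 (by norm_num)]
    have sD : S (3 ^ (k+1) + 1) = 2 := by
      rw [show 3 ^ (k+1) + 1 = 1 + 3 ^ (k+1) * 1 by ring,
          S_split (k+1) 1 1 (by omega), S_lt3 1 (by norm_num)]
    rw [m1, m2, m3, sD, S_C k, sJ]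
    push_cast
    ring
end
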